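/- arXiv:1101.0145 — 7 statements merged into one kernel-verified Lean document; each statement's English description precedes it below -/
import Mathlib

section
/- There is no spherically symmetric probability distribution on the closed unit ball B_d ⊂ ℝ^d with d ≥ 4 whose one-dimensional marginal distributions are uniform on [-1,1]. -/
open MeasureTheory

/-- For d ≥ 4 there is no spherically symmetric probability distribution on the
closed unit ball of ℝ^d whose one-dimensional marginals are uniform on [-1,1]. -/
theorem stmt_4 (d : ℕ) (hd : 4 ≤ d) :
    ¬ ∃ μ : Measure (EuclideanSpace ℝ (Fin d)),
        IsProbabilityMeasure μ ∧
        μ (Metric.closedBall (0 : EuclideanSpace ℝ (Fin d)) 1) = 1 ∧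
        (∀ O : EuclideanSpace ℝ (Fin d) ≃ₗᵢ[ℝ] EuclideanSpace ℝ (Fin d),
          μ.map O = μ) ∧
        (∀ i : Fin d,
          μ.map (fun z => z i)
            = (2 : ENNReal)⁻¹ • volume.restrict (Set.Icc (-1 : ℝ) 1)) := by
  rintro ⟨μ, hprob, hball, -, hmarg⟩
  have hmeas : ∀ i : Fin d, Measurable fun z : EuclideanSpace ℝ (Fin d) => z i :=
    fun i => (measurable_pi_apply i).comp (WithLp.measurable_ofLp (p := 2) (X := Fin d → ℝ))
  -- lintegral of x^2 against the uniform measure on [-1,1] is 1/3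
  have huni : (∫⁻ x, ENNReal.ofReal (x ^ 2)
      ∂((2 : ENNReal)⁻¹ • volume.restrict (Set.Icc (-1 : ℝ) 1)))
      = ENNReal.ofReal (1 / 3) := by
    rw [lintegral_smul_measure]
    have hint : IntegrableOn (fun x : ℝ => x ^ 2) (Set.Icc (-1 : ℝ) 1) volume :=
      (continuous_pow 2).integrableOn_Icc
    have h1 : (∫⁻ x in Set.Icc (-1 : ℝ) 1, ENNReal.ofReal (x ^ 2))
        = ENNReal.ofReal (2 / 3) := by
      rw [← ofReal_integral_eq_lintegral_ofReal hint
        (Filter.Eventually.of_forall fun x => sq_nonneg x)]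
      congr 1
      rw [integral_Icc_eq_integral_Ioc, ← intervalIntegral.integral_of_le (by norm_num),
        integral_pow]
      norm_num
    have h2 : ENNReal.ofReal (2 / 3) = 2 * ENNReal.ofReal (1 / 3) := by
      rw [show (2:ℝ)/3 = 2 * (1/3) by norm_num, ENNReal.ofReal_mul (by norm_num)]
      norm_num
    rw [h1, h2, smul_eq_mul, ← mul_assoc, ENNReal.inv_mul_cancel (by norm_num) (by norm_num), one_mul]
  have hkey : ∀ i : Fin d,
      (∫⁻ z, ENNReal.ofReal ((z i) ^ 2) ∂μ) = ENNReal.ofReal (1 / 3) := by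
    intro i
    have := lintegral_map (μ := μ) (f := fun x : ℝ => ENNReal.ofReal (x ^ 2))
      (by measurability) (hmeas i)
    rw [hmarg i, huni] at this
    exact this.symm
  have hsum : (∫⁻ z, ∑ i : Fin d, ENNReal.ofReal ((z i) ^ 2) ∂μ)
      = (d : ENNReal) * ENNReal.ofReal (1 / 3) := by
    rw [lintegral_finset_sum _ (fun i _ => ((hmeas i).pow_const 2).ennreal_ofReal)]
    simp [hkey, Finset.sum_const]
  -- a.e. bound ∑ (z i)^2 ≤ 1
  have hae : ∀ᵐ z ∂μ, (∑ i : Fin d, ENNReal.ofReal ((z i) ^ 2)) ≤ 1 := by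
    have hcompl : μ (Metric.closedBall (0 : EuclideanSpace ℝ (Fin d)) 1)ᶜ = 0 := by
      rw [measure_compl measurableSet_closedBall (measure_ne_top μ _), hball,
        measure_univ, tsub_self]
    filter_upwards [measure_eq_zero_iff_ae_notMem.mp hcompl] with z hz
    have hz' : ‖z‖ ≤ 1 := by
      simpa [Metric.mem_closedBall] using not_not.mp hz
    have hsq : (∑ i : Fin d, (z i) ^ 2) ≤ 1 := by
      have := EuclideanSpace.norm_eq z
      have h0 : (∑ i : Fin d, (z i) ^ 2) = ‖z‖ ^ 2 := by
        rw [this, Real.sq_sqrt (Finset.sum_nonneg fun i _ => sq_nonneg _)]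
        simp [sq_abs]
      rw [h0]
      nlinarith [norm_nonneg z]
    calc (∑ i : Fin d, ENNReal.ofReal ((z i) ^ 2))
        = ENNReal.ofReal (∑ i : Fin d, (z i) ^ 2) :=
          (ENNReal.ofReal_sum_of_nonneg fun i _ => sq_nonneg _).symm
      _ ≤ ENNReal.ofReal 1 := ENNReal.ofReal_le_ofReal hsq
      _ = 1 := ENNReal.ofReal_one
  have hle : (d : ENNReal) * ENNReal.ofReal (1 / 3) ≤ 1 := by
    rw [← hsum]
    calc (∫⁻ z, ∑ i : Fin d, ENNReal.ofReal ((z i) ^ 2) ∂μ)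
        ≤ ∫⁻ _, 1 ∂μ := lintegral_mono_ae hae
      _ = 1 := by simp
  -- contradiction with d ≥ 4
  have h13 : ENNReal.ofReal (1 / 3) = 3⁻¹ := by
    rw [one_div, ENNReal.ofReal_inv_of_pos (by norm_num)]
    norm_num
  rw [h13] at hle
  have h4 : (4 : ENNReal) * 3⁻¹ ≤ (d : ENNReal) * 3⁻¹ := by
    gcongr
    exact_mod_cast hd
  have : (4 : ENNReal) * 3⁻¹ ≤ 1 := h4.trans hle
  rw [ENNReal.mul_inv_le_iff (by norm_num) (by norm_num)] at this
  norm_num at this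
end

section
/- At most one spherically symmetric probability distribution on the unit ball B_d ⊂ ℝ^d has all one-dimensional marginals uniform on [-1,1]: if Z and Z' are two such random vectors, they have the same law. -/
open MeasureTheory

section Aux

open Real
open scoped NNReal


variable {d : ℕ}

local notation "E'" => EuclideanSpace ℝ (Fin d)

lemma inner_cont (θ : E') : Continuous (fun z : E' => (inner ℝ θ z : ℝ)) :=
  continuous_const.inner continuous_id

lemma proj_cont (i : Fin d) : Continuous (fun z : E' => z i) := by
  exact (EuclideanSpace.proj i).continuous

/-- Key rotation lemma: the integral of `g ∘ ⟪θ, ·⟫` against a spherically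
symmetric measure equals the integral of `g (‖θ‖ * ·)` against any marginal. -/
lemma key_rot (μ : Measure E') [IsProbabilityMeasure μ]
    (hsym : ∀ O : E' ≃ₗᵢ[ℝ] E', μ.map O = μ)
    (g : ℝ → ℝ) (hg : Continuous g) (θ : E') (i : Fin d) :
    ∫ z, g (inner ℝ θ z : ℝ) ∂μ = ∫ t, g (‖θ‖ * t) ∂(μ.map (fun z => z i)) := by
  set b : E' := EuclideanSpace.single i (‖θ‖ : ℝ) with hb
  have hbn : ‖b‖ = ‖θ‖ := by
    rw [hb, EuclideanSpace.norm_single]; exact abs_of_nonneg (norm_nonneg θ)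
  set O : E' ≃ₗᵢ[ℝ] E' := Submodule.reflection (ℝ ∙ (b - θ))ᗮ with hO
  have hOb : O b = θ := Submodule.reflection_sub hbn
  have h1 : ∫ z, g (inner ℝ θ z : ℝ) ∂μ = ∫ z, g (inner ℝ θ (O z) : ℝ) ∂μ := by
    conv_lhs => rw [← hsym O]
    rw [integral_map O.continuous.measurable.aemeasurable
      (Continuous.aestronglyMeasurable
        (show Continuous (fun z : E' => g (inner ℝ θ z)) from hg.comp (inner_cont θ)))]
  have h2 : ∀ z : E', (inner ℝ θ (O z) : ℝ) = ‖θ‖ * z i := by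
    intro z
    rw [← hOb, O.inner_map_map, hb, EuclideanSpace.inner_single_left]
    simp
  rw [h1]
  simp_rw [h2]
  rw [integral_map (proj_cont i).measurable.aemeasurable
    (Continuous.aestronglyMeasurable
      (show Continuous (fun t : ℝ => g (‖θ‖ * t)) from hg.comp (continuous_const.mul continuous_id)))]

lemma cos_mul_cos' (a b : ℝ) : cos a * cos b = 2⁻¹ * cos (a - b) + 2⁻¹ * cos (a + b) := by
  rw [cos_sub, cos_add]; ring

lemma sin_mul_sin' (a b : ℝ) : sin a * sin b = 2⁻¹ * cos (a - b) + -2⁻¹ * cos (a + b) := by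
  rw [cos_sub, cos_add]; ring

lemma sin_mul_cos' (a b : ℝ) : sin a * cos b = 2⁻¹ * sin (a + b) + 2⁻¹ * sin (a - b) := by
  rw [sin_sub, sin_add]; ring

lemma cos_mul_sin' (a b : ℝ) : cos a * sin b = 2⁻¹ * sin (a + b) + -2⁻¹ * sin (a - b) := by
  rw [sin_sub, sin_add]; ring

/-- The set of trigonometric functions of linear functionals. -/
def trigSet (d : ℕ) : Set (EuclideanSpace ℝ (Fin d) → ℝ) :=
  {f | ∃ θ : EuclideanSpace ℝ (Fin d), f = fun z => cos (inner ℝ θ z : ℝ)} ∪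
  {f | ∃ θ : EuclideanSpace ℝ (Fin d), f = fun z => sin (inner ℝ θ z : ℝ)}

lemma trigSet_mul_mem {f g : E' → ℝ} (hf : f ∈ trigSet d) (hg : g ∈ trigSet d) :
    f * g ∈ Submodule.span ℝ (trigSet d) := by
  have memc : ∀ θ : E', (fun z : E' => cos (inner ℝ θ z : ℝ)) ∈ Submodule.span ℝ (trigSet d) :=
    fun θ => Submodule.subset_span (Or.inl ⟨θ, rfl⟩)
  have mems : ∀ θ : E', (fun z : E' => sin (inner ℝ θ z : ℝ)) ∈ Submodule.span ℝ (trigSet d) :=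
    fun θ => Submodule.subset_span (Or.inr ⟨θ, rfl⟩)
  rcases hf with ⟨θ₁, rfl⟩ | ⟨θ₁, rfl⟩ <;> rcases hg with ⟨θ₂, rfl⟩ | ⟨θ₂, rfl⟩
  · have : ((fun z : E' => cos (inner ℝ θ₁ z : ℝ)) * fun z : E' => cos (inner ℝ θ₂ z : ℝ))
        = (2⁻¹ : ℝ) • (fun z : E' => cos (inner ℝ (θ₁ - θ₂) z : ℝ))
          + (2⁻¹ : ℝ) • (fun z : E' => cos (inner ℝ (θ₁ + θ₂) z : ℝ)) := by
      funext z
      simp only [Pi.mul_apply, Pi.add_apply, Pi.smul_apply, smul_eq_mul,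
        inner_sub_left, inner_add_left]
      exact cos_mul_cos' _ _
    rw [this]
    exact Submodule.add_mem _ (Submodule.smul_mem _ _ (memc _))
      (Submodule.smul_mem _ _ (memc _))
  · have : ((fun z : E' => cos (inner ℝ θ₁ z : ℝ)) * fun z : E' => sin (inner ℝ θ₂ z : ℝ))
        = (2⁻¹ : ℝ) • (fun z : E' => sin (inner ℝ (θ₁ + θ₂) z : ℝ))
          + (-2⁻¹ : ℝ) • (fun z : E' => sin (inner ℝ (θ₁ - θ₂) z : ℝ)) := by
      funext z
      simp only [Pi.mul_apply, Pi.add_apply, Pi.smul_apply, smul_eq_mul,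
        inner_sub_left, inner_add_left]
      exact cos_mul_sin' _ _
    rw [this]
    exact Submodule.add_mem _ (Submodule.smul_mem _ _ (mems _))
      (Submodule.smul_mem _ _ (mems _))
  · have : ((fun z : E' => sin (inner ℝ θ₁ z : ℝ)) * fun z : E' => cos (inner ℝ θ₂ z : ℝ))
        = (2⁻¹ : ℝ) • (fun z : E' => sin (inner ℝ (θ₁ + θ₂) z : ℝ))
          + (2⁻¹ : ℝ) • (fun z : E' => sin (inner ℝ (θ₁ - θ₂) z : ℝ)) := by
      funext z
      simp only [Pi.mul_apply, Pi.add_apply, Pi.smul_apply, smul_eq_mul,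
        inner_sub_left, inner_add_left]
      exact sin_mul_cos' _ _
    rw [this]
    exact Submodule.add_mem _ (Submodule.smul_mem _ _ (mems _))
      (Submodule.smul_mem _ _ (mems _))
  · have : ((fun z : E' => sin (inner ℝ θ₁ z : ℝ)) * fun z : E' => sin (inner ℝ θ₂ z : ℝ))
        = (2⁻¹ : ℝ) • (fun z : E' => cos (inner ℝ (θ₁ - θ₂) z : ℝ))
          + (-2⁻¹ : ℝ) • (fun z : E' => cos (inner ℝ (θ₁ + θ₂) z : ℝ)) := by
      funext z
      simp only [Pi.mul_apply, Pi.add_apply, Pi.smul_apply, smul_eq_mul,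
        inner_sub_left, inner_add_left]
      exact sin_mul_sin' _ _
    rw [this]
    exact Submodule.add_mem _ (Submodule.smul_mem _ _ (memc _))
      (Submodule.smul_mem _ _ (memc _))

lemma trigSpan_mul_mem {f g : E' → ℝ} (hf : f ∈ Submodule.span ℝ (trigSet d))
    (hg : g ∈ Submodule.span ℝ (trigSet d)) : f * g ∈ Submodule.span ℝ (trigSet d) := by
  have key : Submodule.span ℝ (trigSet d) * Submodule.span ℝ (trigSet d)
      ≤ Submodule.span ℝ (trigSet d) := by
    rw [Submodule.span_mul_span]
    refine Submodule.span_le.mpr ?_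
    rintro x ⟨a, ha, b, hb, rfl⟩
    exact trigSet_mul_mem ha hb
  exact key (Submodule.mul_mem_mul hf hg)

lemma trigSpan_one_mem : (1 : E' → ℝ) ∈ Submodule.span ℝ (trigSet d) := by
  have : (1 : E' → ℝ) = fun z : E' => cos (inner ℝ (0 : E') z : ℝ) := by
    funext z; simp
  rw [this]
  exact Submodule.subset_span (Or.inl ⟨0, rfl⟩)

lemma trigSpan_const_mem (c : ℝ) : (fun _ : E' => c) ∈ Submodule.span ℝ (trigSet d) := by
  have : (fun _ : E' => c) = c • (1 : E' → ℝ) := by funext z; simp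
  rw [this]
  exact Submodule.smul_mem _ _ trigSpan_one_mem

/-- The closed unit ball as a subtype. -/
abbrev uBall (d : ℕ) : Set (EuclideanSpace ℝ (Fin d)) :=
  Metric.closedBall (0 : EuclideanSpace ℝ (Fin d)) 1

instance uBall_compact (d : ℕ) : CompactSpace (uBall d) :=
  isCompact_iff_compactSpace.mp (isCompact_closedBall _ _)

/-- The subalgebra of continuous functions on the ball that are restrictions of
elements of the trigonometric span. -/
noncomputable def trigAlg (d : ℕ) : Subalgebra ℝ C(uBall d, ℝ) where
  carrier := {F | ∃ g ∈ Submodule.span ℝ (trigSet d), ∀ x : uBall d, F x = g ↑x}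
  add_mem' := by
    rintro F G ⟨f, hf, hF⟩ ⟨g, hg, hG⟩
    exact ⟨f + g, Submodule.add_mem _ hf hg, fun x => by
      simp [hF x, hG x]⟩
  mul_mem' := by
    rintro F G ⟨f, hf, hF⟩ ⟨g, hg, hG⟩
    exact ⟨f * g, trigSpan_mul_mem hf hg, fun x => by
      simp [hF x, hG x]⟩
  algebraMap_mem' := fun c =>
    ⟨fun _ => c, trigSpan_const_mem c, fun x => rfl⟩

lemma trigAlg_separates : (trigAlg d).SeparatesPoints := by
  intro x y hxy
  have hsub : ((x : E') - (y : E')) ≠ 0 := sub_ne_zero.mpr (Subtype.coe_injective.ne hxy)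
  have hns : (0 : ℝ) < ‖(x : E') - (y : E')‖ ^ 2 :=
    pow_pos (norm_pos_iff.mpr hsub) 2
  set c : ℝ := π / ‖(x : E') - (y : E')‖ ^ 2 with hc
  set θ : E' := c • ((x : E') - (y : E')) with hθ
  have hab : (inner ℝ θ (x : E') : ℝ) - (inner ℝ θ (y : E') : ℝ) = π := by
    rw [← inner_sub_right]
    rw [hθ, real_inner_smul_left, real_inner_self_eq_norm_sq, hc]
    field_simp
  set a : ℝ := (inner ℝ θ (x : E') : ℝ) with ha
  set b : ℝ := (inner ℝ θ (y : E') : ℝ) with hb2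
  have haeq : a = b + π := by linarith [hab]
  have memc : ContinuousMap.mk (fun p : uBall d => cos (inner ℝ θ (p : E') : ℝ))
      ((continuous_cos.comp (continuous_const.inner continuous_id)).comp continuous_subtype_val)
      ∈ trigAlg d :=
    ⟨fun z => cos (inner ℝ θ z : ℝ), Submodule.subset_span (Or.inl ⟨θ, rfl⟩), fun _ => rfl⟩
  have mems : ContinuousMap.mk (fun p : uBall d => sin (inner ℝ θ (p : E') : ℝ))
      ((continuous_sin.comp (continuous_const.inner continuous_id)).comp continuous_subtype_val)
      ∈ trigAlg d :=
    ⟨fun z => sin (inner ℝ θ z : ℝ), Submodule.subset_span (Or.inr ⟨θ, rfl⟩), fun _ => rfl⟩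
  by_cases hcos : cos a = cos b
  · -- then cos b = 0, so sin separates
    have hcb : cos b = 0 := by
      have : cos a = -cos b := by rw [haeq, cos_add_pi]
      linarith [hcos, this]
    have hsb : sin b ≠ 0 := by
      intro h
      have := sin_sq_add_cos_sq b
      rw [h, hcb] at this; norm_num at this
    refine ⟨_, ⟨_, mems, rfl⟩, ?_⟩
    simp only [ContinuousMap.coe_mk]
    rw [← ha, ← hb2, haeq, sin_add_pi]
    intro h
    exact hsb (by linarith [h])
  · refine ⟨_, ⟨_, memc, rfl⟩, ?_⟩
    simp only [ContinuousMap.coe_mk]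
    rw [← ha, ← hb2]
    exact hcos

lemma trigSpan_integral (μ ν : Measure E') [IsProbabilityMeasure μ] [IsProbabilityMeasure ν]
    (hμsym : ∀ O : E' ≃ₗᵢ[ℝ] E', μ.map O = μ)
    (hνsym : ∀ O : E' ≃ₗᵢ[ℝ] E', ν.map O = ν)
    (hmarg : ∀ i : Fin d, μ.map (fun z => z i) = ν.map (fun z => z i))
    {f : E' → ℝ} (hf : f ∈ Submodule.span ℝ (trigSet d)) :
    Integrable f μ ∧ Integrable f ν ∧ ∫ z, f z ∂μ = ∫ z, f z ∂ν := by
  -- base case helper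
  have base : ∀ (g : ℝ → ℝ), Continuous g → (∀ t, |g t| ≤ 1) → ∀ θ : E',
      Integrable (fun z : E' => g (inner ℝ θ z : ℝ)) μ ∧
      Integrable (fun z : E' => g (inner ℝ θ z : ℝ)) ν ∧
      ∫ z, g (inner ℝ θ z : ℝ) ∂μ = ∫ z, g (inner ℝ θ z : ℝ) ∂ν := by
    intro g hg hgb θ
    have hcont : Continuous (fun z : E' => g (inner ℝ θ z : ℝ)) := hg.comp (inner_cont θ)
    have int : ∀ (κ : Measure E'), IsProbabilityMeasure κ →
        Integrable (fun z : E' => g (inner ℝ θ z : ℝ)) κ := by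
      intro κ hκ
      refine (integrable_const (1 : ℝ)).mono' hcont.aestronglyMeasurable ?_
      filter_upwards with z
      simpa using hgb _
    refine ⟨int μ ‹_›, int ν ‹_›, ?_⟩
    rcases Nat.eq_zero_or_pos d with hd | hd
    · -- d = 0 : θ = 0 and inner ℝ is 0, both integrals are g 0
      have hθ0 : θ = 0 := by ext j; exact absurd j.isLt (by omega)
      simp only [hθ0, inner_zero_left]
      simp [integral_const]
    · have i : Fin d := ⟨0, hd⟩
      rw [key_rot μ hμsym g hg θ i, key_rot ν hνsym g hg θ i, hmarg i]
  refine Submodule.span_induction ?_ ?_ ?_ ?_ hf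
  · rintro f (⟨θ, rfl⟩ | ⟨θ, rfl⟩)
    · exact base cos continuous_cos (fun t => abs_cos_le_one t) θ
    · exact base sin continuous_sin (fun t => abs_sin_le_one t) θ
  · exact ⟨integrable_zero _ _ _, integrable_zero _ _ _, by simp⟩
  · rintro f g _ _ ⟨hfμ, hfν, hfe⟩ ⟨hgμ, hgν, hge⟩
    exact ⟨hfμ.add hgμ, hfν.add hgν, by
      simp only [Pi.add_apply]
      rw [integral_add hfμ hgμ, integral_add hfν hgν, hfe, hge]⟩
  · rintro c f _ ⟨hfμ, hfν, hfe⟩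
    exact ⟨hfμ.smul c, hfν.smul c, by
      simp only [Pi.smul_apply, smul_eq_mul, integral_const_mul, hfe]⟩

lemma main_integral_eq (μ ν : Measure E') [IsProbabilityMeasure μ] [IsProbabilityMeasure ν]
    (hμball : μ (uBall d) = 1) (hνball : ν (uBall d) = 1)
    (hμsym : ∀ O : E' ≃ₗᵢ[ℝ] E', μ.map O = μ)
    (hνsym : ∀ O : E' ≃ₗᵢ[ℝ] E', ν.map O = ν)
    (hmarg : ∀ i : Fin d, μ.map (fun z => z i) = ν.map (fun z => z i))
    (f : E' → ℝ) (hc : Continuous f) (hiμ : Integrable f μ) (hiν : Integrable f ν) :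
    ∫ z, f z ∂μ = ∫ z, f z ∂ν := by
  have hμc : ∀ᵐ z ∂μ, z ∈ uBall d := by
    rw [ae_iff]
    have : {z : E' | ¬ z ∈ uBall d} = (uBall d)ᶜ := rfl
    rw [this, measure_compl measurableSet_closedBall (measure_ne_top μ _), hμball]
    simp
  have hνc : ∀ᵐ z ∂ν, z ∈ uBall d := by
    rw [ae_iff]
    have : {z : E' | ¬ z ∈ uBall d} = (uBall d)ᶜ := rfl
    rw [this, measure_compl measurableSet_closedBall (measure_ne_top ν _), hνball]
    simp
  by_contra hne
  set δ := |∫ z, f z ∂μ - ∫ z, f z ∂ν| with hδdef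
  have hδ : 0 < δ := abs_pos.mpr (sub_ne_zero.mpr hne)
  set ε := δ / 3 with hε
  have hεpos : 0 < ε := by positivity
  obtain ⟨g, hg⟩ := ContinuousMap.exists_mem_subalgebra_near_continuousMap_of_separatesPoints
    (trigAlg d) trigAlg_separates (ContinuousMap.restrict (uBall d) ⟨f, hc⟩) ε hεpos
  obtain ⟨g0, hg0span, hg0⟩ := g.2
  obtain ⟨hintμ, hintν, heq⟩ := trigSpan_integral μ ν hμsym hνsym hmarg hg0span
  have hb : ∀ x ∈ uBall d, |f x - g0 x| ≤ ε := by
    intro x hx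
    have h1 := (ContinuousMap.norm_lt_iff _ hεpos).mp hg ⟨x, hx⟩
    have h2 : ((g : C(uBall d, ℝ)) - ContinuousMap.restrict (uBall d) ⟨f, hc⟩) ⟨x, hx⟩
        = g0 x - f x := by
      simp [ContinuousMap.restrict_apply, hg0 ⟨x, hx⟩]
    rw [h2] at h1
    rw [abs_sub_comm]
    simpa using h1.le
  have bddμ : |∫ z, f z ∂μ - ∫ z, g0 z ∂μ| ≤ ε := by
    rw [← integral_sub hiμ hintμ]
    have := norm_integral_le_of_norm_le_const (μ := μ) (C := ε)
      (f := fun z => f z - g0 z) ?_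
    · simpa [measure_univ] using this
    · filter_upwards [hμc] with z hz
      simpa using hb z hz
  have bddν : |∫ z, f z ∂ν - ∫ z, g0 z ∂ν| ≤ ε := by
    rw [← integral_sub hiν hintν]
    have := norm_integral_le_of_norm_le_const (μ := ν) (C := ε)
      (f := fun z => f z - g0 z) ?_
    · simpa [measure_univ] using this
    · filter_upwards [hνc] with z hz
      simpa using hb z hz
  have : δ ≤ 2 * ε := by
    have h3 : δ = |(∫ z, f z ∂μ - ∫ z, g0 z ∂μ) - (∫ z, f z ∂ν - ∫ z, g0 z ∂ν)| := by
      rw [hδdef, heq]; ring_nf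
    rw [h3]
    calc |(∫ z, f z ∂μ - ∫ z, g0 z ∂μ) - (∫ z, f z ∂ν - ∫ z, g0 z ∂ν)|
        ≤ |∫ z, f z ∂μ - ∫ z, g0 z ∂μ| + |∫ z, f z ∂ν - ∫ z, g0 z ∂ν| := abs_sub _ _
      _ ≤ 2 * ε := by linarith
  rw [hε] at this
  linarith

end Aux

open scoped NNReal

/-- At most one spherically symmetric probability distribution on the unit ball
of ℝ^d has all one-dimensional marginals uniform on [-1,1]. -/
theorem stmt_7 (d : ℕ) (μ ν : Measure (EuclideanSpace ℝ (Fin d)))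
    (hμprob : IsProbabilityMeasure μ) (hνprob : IsProbabilityMeasure ν)
    (hμball : μ (Metric.closedBall (0 : EuclideanSpace ℝ (Fin d)) 1) = 1)
    (hνball : ν (Metric.closedBall (0 : EuclideanSpace ℝ (Fin d)) 1) = 1)
    (hμsym : ∀ O : EuclideanSpace ℝ (Fin d) ≃ₗᵢ[ℝ] EuclideanSpace ℝ (Fin d),
      μ.map O = μ)
    (hνsym : ∀ O : EuclideanSpace ℝ (Fin d) ≃ₗᵢ[ℝ] EuclideanSpace ℝ (Fin d),
      ν.map O = ν)
    (hμmarg : ∀ i : Fin d,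
      μ.map (fun z => z i)
        = (2 : ENNReal)⁻¹ • volume.restrict (Set.Icc (-1 : ℝ) 1))
    (hνmarg : ∀ i : Fin d,
      ν.map (fun z => z i)
        = (2 : ENNReal)⁻¹ • volume.restrict (Set.Icc (-1 : ℝ) 1)) :
    μ = ν := by
  have hmarg : ∀ i : Fin d, μ.map (fun z => z i) = ν.map (fun z => z i) := by
    intro i; rw [hμmarg i, hνmarg i]
  refine ext_of_forall_lintegral_eq_of_IsFiniteMeasure ?_
  intro f
  have hiμ : Integrable (fun x => ((f x : ℝ≥0) : ℝ)) μ := f.integrable_of_nnreal μ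
  have hiν : Integrable (fun x => ((f x : ℝ≥0) : ℝ)) ν := f.integrable_of_nnreal ν
  have hcont : Continuous (fun x => ((f x : ℝ≥0) : ℝ)) :=
    NNReal.continuous_coe.comp f.continuous
  have := main_integral_eq μ ν hμball hνball hμsym hνsym hmarg _ hcont hiμ hiν
  rw [lintegral_coe_eq_integral _ hiμ, lintegral_coe_eq_integral _ hiν, this]
end

section
/- For all 0 ≤ x, y ≤ 1 with x² + y² < 1, the identity arcsin(x√(1-x²-y²)/(√(1-x²)√(x²+y²))) + arcsin(y√(1-x²-y²)/(√(1-y²)√(x²+y²))) = arcsin(√(1-x²-y²)/√((1-x²)(1-y²))) holds, assuming (x,y) ≠ (0,0). -/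
set_option maxHeartbeats 1000000

/-- The arcsine identity α + β = γ underlying h(x,y) ≡ π/2 in the paper. -/
theorem stmt_9 (x y : ℝ) (hx0 : 0 ≤ x) (hx1 : x ≤ 1) (hy0 : 0 ≤ y) (hy1 : y ≤ 1)
    (hxy : x ^ 2 + y ^ 2 < 1) (hne : (x, y) ≠ (0, 0)) :
    Real.arcsin (x * Real.sqrt (1 - x ^ 2 - y ^ 2) /
        (Real.sqrt (1 - x ^ 2) * Real.sqrt (x ^ 2 + y ^ 2)))
      + Real.arcsin (y * Real.sqrt (1 - x ^ 2 - y ^ 2) /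
        (Real.sqrt (1 - y ^ 2) * Real.sqrt (x ^ 2 + y ^ 2)))
      = Real.arcsin (Real.sqrt (1 - x ^ 2 - y ^ 2) /
        Real.sqrt ((1 - x ^ 2) * (1 - y ^ 2))) := by
  have hr0 : 0 < x ^ 2 + y ^ 2 := by
    rcases eq_or_lt_of_le hx0 with h | h
    · rcases eq_or_lt_of_le hy0 with h' | h'
      · exact absurd (by simp [← h, ← h']) hne
      · positivity
    · positivity
  have hx2 : x ^ 2 < 1 := by nlinarith
  have hy2 : y ^ 2 < 1 := by nlinarith
  have hs0 : 0 ≤ 1 - x ^ 2 - y ^ 2 := by linarith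
  set s := Real.sqrt (1 - x ^ 2 - y ^ 2) with hs
  set px := Real.sqrt (1 - x ^ 2) with hpx
  set py := Real.sqrt (1 - y ^ 2) with hpy
  set r := Real.sqrt (x ^ 2 + y ^ 2) with hr
  have hs2 : s ^ 2 = 1 - x ^ 2 - y ^ 2 := Real.sq_sqrt hs0
  have hpx2 : px ^ 2 = 1 - x ^ 2 := Real.sq_sqrt (by linarith)
  have hpy2 : py ^ 2 = 1 - y ^ 2 := Real.sq_sqrt (by linarith)
  have hr2 : r ^ 2 = x ^ 2 + y ^ 2 := Real.sq_sqrt hr0.le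
  have hpxp : 0 < px := Real.sqrt_pos.mpr (by linarith)
  have hpyp : 0 < py := Real.sqrt_pos.mpr (by linarith)
  have hrp : 0 < r := Real.sqrt_pos.mpr hr0
  have hsn : 0 ≤ s := Real.sqrt_nonneg _
  have hne1 : (1 - x ^ 2) ≠ 0 := by linarith
  have hne2 : (1 - y ^ 2) ≠ 0 := by linarith
  have hne3 : (x ^ 2 + y ^ 2) ≠ 0 := hr0.ne'
  set a := x * s / (px * r) with ha
  set b := y * s / (py * r) with hb
  have ha0 : 0 ≤ a := by positivity
  have hb0 : 0 ≤ b := by positivity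
  have hca : 1 - a ^ 2 = (y / (px * r)) ^ 2 := by
    rw [ha, div_pow, mul_pow, mul_pow, hs2, hpx2, hr2, div_pow, mul_pow, hpx2, hr2]
    field_simp
    ring
  have hcb : 1 - b ^ 2 = (x / (py * r)) ^ 2 := by
    rw [hb, div_pow, mul_pow, mul_pow, hs2, hpy2, hr2, div_pow, mul_pow, hpy2, hr2]
    field_simp
    ring
  have ha1 : a ≤ 1 := by nlinarith [sq_nonneg (y / (px * r))]
  have hb1 : b ≤ 1 := by nlinarith [sq_nonneg (x / (py * r))]
  have hcosa : Real.cos (Real.arcsin a) = y / (px * r) := by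
    rw [Real.cos_arcsin, hca, Real.sqrt_sq (by positivity)]
  have hcosb : Real.cos (Real.arcsin b) = x / (py * r) := by
    rw [Real.cos_arcsin, hcb, Real.sqrt_sq (by positivity)]
  have hsina : Real.sin (Real.arcsin a) = a := Real.sin_arcsin (by linarith) ha1
  have hsinb : Real.sin (Real.arcsin b) = b := Real.sin_arcsin (by linarith) hb1
  set α := Real.arcsin a
  set β := Real.arcsin b
  have hα0 : 0 ≤ α := Real.arcsin_nonneg.mpr ha0
  have hβ0 : 0 ≤ β := Real.arcsin_nonneg.mpr hb0
  have hαpi : α ≤ Real.pi / 2 := Real.arcsin_le_pi_div_two a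
  have hβpi : β ≤ Real.pi / 2 := Real.arcsin_le_pi_div_two b
  have hcossum : Real.cos (α + β) = x * y / (px * py) := by
    rw [Real.cos_add, hcosa, hcosb, hsina, hsinb, ha, hb]
    rw [div_mul_div_comm, div_mul_div_comm, div_sub_div_same,
      div_eq_div_iff (by positivity) (by positivity)]
    linear_combination (-(x * y * px * py)) * hs2 + (-(x * y * px * py)) * hr2
  have hsum_le : α + β ≤ Real.pi / 2 := by
    by_contra h
    push_neg at h
    have h1 : Real.cos (α + β) < Real.cos (Real.pi / 2) := by
      apply Real.strictAntiOn_cos ⟨by positivity, by linarith⟩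
        ⟨by linarith, by linarith [Real.pi_pos]⟩ h
    rw [Real.cos_pi_div_two, hcossum] at h1
    have : 0 ≤ x * y / (px * py) := by positivity
    linarith
  have hsinsum : Real.sin (α + β) = s / (px * py) := by
    rw [Real.sin_add, hcosa, hcosb, hsina, hsinb, ha, hb]
    rw [div_mul_div_comm, div_mul_div_comm, ← add_div,
      div_eq_div_iff (by positivity) (by positivity)]
    linear_combination (-(s * px * py)) * hr2
  have hgoal : Real.arcsin (s / Real.sqrt ((1 - x ^ 2) * (1 - y ^ 2))) = α + β := by
    rw [Real.sqrt_mul (by linarith), ← hpx, ← hpy, ← hsinsum]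
    exact Real.arcsin_sin (by linarith [Real.pi_pos]) hsum_le
  rw [hgoal]
end

section
/- Let (X,Y) be a random vector on [-1,1]² with uniform[-1,1] marginals whose law is invariant under all sign changes: (X,Y) =ᵈ (εX, δY) for ε,δ ∈ {±1}. Then for all (x,y) ∈ [-1,1]², the cdf satisfies F(x,y) = (x+y+1)/4 + σ(xy)·F₀(|x|,|y|), where F₀(x,y) = P[0 ≤ X ≤ x, 0 ≤ Y ≤ y] and σ(w) = sign(w) with σ(0) = 0. -/
open MeasureTheory

/-- For a sign-change invariant law on [-1,1]² with uniform[-1,1] marginals,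
F(x,y) = (x+y+1)/4 + sign(xy)·F₀(|x|,|y|). -/
theorem stmt_10 (μ : Measure (ℝ × ℝ)) (hprob : IsProbabilityMeasure μ)
    (hsupp : μ ((Set.Icc (-1 : ℝ) 1 ×ˢ Set.Icc (-1 : ℝ) 1)ᶜ) = 0)
    (hmarg1 : μ.map Prod.fst
      = (2 : ENNReal)⁻¹ • volume.restrict (Set.Icc (-1 : ℝ) 1))
    (hmarg2 : μ.map Prod.snd
      = (2 : ENNReal)⁻¹ • volume.restrict (Set.Icc (-1 : ℝ) 1))
    (hsign : ∀ ε δ : ℝ, (ε = 1 ∨ ε = -1) → (δ = 1 ∨ δ = -1) →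
      μ.map (fun p : ℝ × ℝ => (ε * p.1, δ * p.2)) = μ) :
    ∀ x ∈ Set.Icc (-1 : ℝ) 1, ∀ y ∈ Set.Icc (-1 : ℝ) 1,
      (μ {p : ℝ × ℝ | p.1 ≤ x ∧ p.2 ≤ y}).toReal
        = (x + y + 1) / 4
          + Real.sign (x * y) *
            (μ {p : ℝ × ℝ | 0 ≤ p.1 ∧ p.1 ≤ |x| ∧ 0 ≤ p.2 ∧ p.2 ≤ |y|}).toReal := by
  classical
  -- marginal computations
  have hfst : ∀ S : Set ℝ, MeasurableSet S →
      μ (S ×ˢ (Set.univ : Set ℝ)) = 2⁻¹ * volume (S ∩ Set.Icc (-1 : ℝ) 1) := by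
    intro S hS
    have h1 : S ×ˢ (Set.univ : Set ℝ) = Prod.fst ⁻¹' S := by
      ext p; simp [Set.mem_prod]
    rw [h1, ← Measure.map_apply measurable_fst hS, hmarg1, Measure.smul_apply,
      Measure.restrict_apply hS, smul_eq_mul]
  have hsnd : ∀ T : Set ℝ, MeasurableSet T →
      μ ((Set.univ : Set ℝ) ×ˢ T) = 2⁻¹ * volume (T ∩ Set.Icc (-1 : ℝ) 1) := by
    intro T hT
    have h1 : (Set.univ : Set ℝ) ×ˢ T = Prod.snd ⁻¹' T := by
      ext p; simp [Set.mem_prod]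
    rw [h1, ← Measure.map_apply measurable_snd hT, hmarg2, Measure.smul_apply,
      Measure.restrict_apply hT, smul_eq_mul]
  -- null lines
  have hvline : ∀ (c : ℝ) (T : Set ℝ), μ (({c} : Set ℝ) ×ˢ T) = 0 := by
    intro c T
    have h0 : μ (({c} : Set ℝ) ×ˢ (Set.univ : Set ℝ)) = 0 := by
      rw [hfst {c} (measurableSet_singleton c)]
      have hv : volume (({c} : Set ℝ) ∩ Set.Icc (-1 : ℝ) 1) = 0 :=
        measure_mono_null Set.inter_subset_left Real.volume_singleton
      rw [hv, mul_zero]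
    exact measure_mono_null (Set.prod_mono_right (Set.subset_univ T)) h0
  have hhline : ∀ (S : Set ℝ) (c : ℝ), μ (S ×ˢ ({c} : Set ℝ)) = 0 := by
    intro S c
    have h0 : μ ((Set.univ : Set ℝ) ×ˢ ({c} : Set ℝ)) = 0 := by
      rw [hsnd {c} (measurableSet_singleton c)]
      have hv : volume (({c} : Set ℝ) ∩ Set.Icc (-1 : ℝ) 1) = 0 :=
        measure_mono_null Set.inter_subset_left Real.volume_singleton
      rw [hv, mul_zero]
    exact measure_mono_null (Set.prod_mono_left (Set.subset_univ S)) h0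
  have hunull : ∀ A N : Set (ℝ × ℝ), μ N = 0 → μ (A ∪ N) = μ A := by
    intro A N hN
    refine le_antisymm (le_trans (measure_union_le A N) ?_) (measure_mono Set.subset_union_left)
    rw [hN, add_zero]
  -- swap modulo a single line
  have hswapX : ∀ (S S' T : Set ℝ) (c : ℝ), S ∪ {c} = S' ∪ {c} →
      μ (S ×ˢ T) = μ (S' ×ˢ T) := by
    intro S S' T c h
    have h1 : μ (S ×ˢ T) = μ ((S ∪ {c}) ×ˢ T) := by
      rw [Set.union_prod]; exact (hunull _ _ (hvline c T)).symm
    have h2 : μ (S' ×ˢ T) = μ ((S' ∪ {c}) ×ˢ T) := by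
      rw [Set.union_prod]; exact (hunull _ _ (hvline c T)).symm
    rw [h1, h2, h]
  have hswapY : ∀ (S T T' : Set ℝ) (c : ℝ), T ∪ {c} = T' ∪ {c} →
      μ (S ×ˢ T) = μ (S ×ˢ T') := by
    intro S T T' c h
    have h1 : μ (S ×ˢ T) = μ (S ×ˢ (T ∪ {c})) := by
      rw [Set.prod_union]; exact (hunull _ _ (hhline S c)).symm
    have h2 : μ (S ×ˢ T') = μ (S ×ˢ (T' ∪ {c})) := by
      rw [Set.prod_union]; exact (hunull _ _ (hhline S c)).symm
    rw [h1, h2, h]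
  -- flips
  have hflipX : ∀ S T : Set ℝ, MeasurableSet S → MeasurableSet T →
      μ (S ×ˢ T) = μ (((fun r : ℝ => -r) ⁻¹' S) ×ˢ T) := by
    intro S T hS hT
    have hmap := hsign (-1) 1 (Or.inr rfl) (Or.inl rfl)
    have hmeas : Measurable fun p : ℝ × ℝ => ((-1 : ℝ) * p.1, (1 : ℝ) * p.2) :=
      (measurable_fst.const_mul _).prodMk (measurable_snd.const_mul _)
    calc μ (S ×ˢ T)
        = (μ.map fun p : ℝ × ℝ => ((-1 : ℝ) * p.1, (1 : ℝ) * p.2)) (S ×ˢ T) := by rw [hmap]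
      _ = μ ((fun p : ℝ × ℝ => ((-1 : ℝ) * p.1, (1 : ℝ) * p.2)) ⁻¹' (S ×ˢ T)) :=
          Measure.map_apply hmeas (hS.prod hT)
      _ = μ (((fun r : ℝ => -r) ⁻¹' S) ×ˢ T) := by
          congr 1; ext p; simp [Set.mem_prod]
  have hflipY : ∀ S T : Set ℝ, MeasurableSet S → MeasurableSet T →
      μ (S ×ˢ T) = μ (S ×ˢ ((fun r : ℝ => -r) ⁻¹' T)) := by
    intro S T hS hT
    have hmap := hsign 1 (-1) (Or.inl rfl) (Or.inr rfl)
    have hmeas : Measurable fun p : ℝ × ℝ => ((1 : ℝ) * p.1, (-1 : ℝ) * p.2) :=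
      (measurable_fst.const_mul _).prodMk (measurable_snd.const_mul _)
    calc μ (S ×ˢ T)
        = (μ.map fun p : ℝ × ℝ => ((1 : ℝ) * p.1, (-1 : ℝ) * p.2)) (S ×ˢ T) := by rw [hmap]
      _ = μ ((fun p : ℝ × ℝ => ((1 : ℝ) * p.1, (-1 : ℝ) * p.2)) ⁻¹' (S ×ˢ T)) :=
          Measure.map_apply hmeas (hS.prod hT)
      _ = μ (S ×ˢ ((fun r : ℝ => -r) ⁻¹' T)) := by
          congr 1; ext p; simp [Set.mem_prod]
  -- preimage facts
  have hpreIic : ∀ c : ℝ, (fun r : ℝ => -r) ⁻¹' Set.Iic c = Set.Ici (-c) := by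
    intro c; ext r; simp [neg_le]
  -- Ici vs Ioi swap
  have hIciIoi : ∀ c : ℝ, Set.Ici c ∪ ({c} : Set ℝ) = Set.Ioi c ∪ {c} := by
    intro c; ext r
    simp only [Set.mem_union, Set.mem_Ici, Set.mem_Ioi, Set.mem_singleton_iff]
    constructor
    · rintro (h | h)
      · rcases lt_or_eq_of_le h with h' | h'
        · exact Or.inl h'
        · exact Or.inr h'.symm
      · exact Or.inr h
    · rintro (h | h)
      · exact Or.inl h.le
      · exact Or.inr h
  -- additivity in ℝ
  have hadd : ∀ A B : Set (ℝ × ℝ), MeasurableSet B → Disjoint A B →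
      (μ (A ∪ B)).toReal = (μ A).toReal + (μ B).toReal := by
    intro A B hB hAB
    rw [measure_union hAB hB, ENNReal.toReal_add (measure_ne_top μ A) (measure_ne_top μ B)]
  -- half-strip values
  have hXval : ∀ S : Set ℝ, MeasurableSet S → ∀ r : ℝ, 0 ≤ r →
      volume (S ∩ Set.Icc (-1 : ℝ) 1) = ENNReal.ofReal r →
      (μ (S ×ˢ (Set.univ : Set ℝ))).toReal = r / 2 := by
    intro S hS r hr hvol
    rw [hfst S hS, hvol, ENNReal.toReal_mul, ENNReal.toReal_ofReal hr]
    norm_num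
    ring
  have hYval : ∀ T : Set ℝ, MeasurableSet T → ∀ r : ℝ, 0 ≤ r →
      volume (T ∩ Set.Icc (-1 : ℝ) 1) = ENNReal.ofReal r →
      (μ ((Set.univ : Set ℝ) ×ˢ T)).toReal = r / 2 := by
    intro T hT r hr hvol
    rw [hsnd T hT, hvol, ENNReal.toReal_mul, ENNReal.toReal_ofReal hr]
    norm_num
    ring
  have hIicVol : ∀ c : ℝ, c ∈ Set.Icc (-1 : ℝ) 1 →
      volume (Set.Iic c ∩ Set.Icc (-1 : ℝ) 1) = ENNReal.ofReal (c + 1) := by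
    intro c hc
    obtain ⟨hc1, hc2⟩ := hc
    have h1 : Set.Iic c ∩ Set.Icc (-1 : ℝ) 1 = Set.Icc (-1) c := by
      ext r
      simp only [Set.mem_inter_iff, Set.mem_Iic, Set.mem_Icc]
      constructor
      · rintro ⟨h, h1', _⟩; exact ⟨h1', h⟩
      · rintro ⟨h1', h2'⟩; exact ⟨h2', h1', le_trans h2' hc2⟩
    rw [h1, Real.volume_Icc]
    congr 1; ring
  have hIocVol : ∀ a : ℝ, a ∈ Set.Icc (0 : ℝ) 1 →
      volume (Set.Ioc 0 a ∩ Set.Icc (-1 : ℝ) 1) = ENNReal.ofReal a := by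
    intro a ha
    obtain ⟨ha1, ha2⟩ := ha
    have h1 : Set.Ioc (0 : ℝ) a ∩ Set.Icc (-1 : ℝ) 1 = Set.Ioc 0 a := by
      apply Set.inter_eq_left.mpr
      intro r hr
      obtain ⟨hr1, hr2⟩ := hr
      exact ⟨by linarith, by linarith⟩
    rw [h1, Real.volume_Ioc]
    congr 1; ring
  have hIicX : ∀ c : ℝ, c ∈ Set.Icc (-1 : ℝ) 1 →
      (μ (Set.Iic c ×ˢ (Set.univ : Set ℝ))).toReal = (c + 1) / 2 := fun c hc =>
    hXval _ measurableSet_Iic _ (by have := hc.1; linarith) (hIicVol c hc)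
  have hIicY : ∀ c : ℝ, c ∈ Set.Icc (-1 : ℝ) 1 →
      (μ ((Set.univ : Set ℝ) ×ˢ Set.Iic c)).toReal = (c + 1) / 2 := fun c hc =>
    hYval _ measurableSet_Iic _ (by have := hc.1; linarith) (hIicVol c hc)
  have hIocX : ∀ a : ℝ, a ∈ Set.Icc (0 : ℝ) 1 →
      (μ (Set.Ioc 0 a ×ˢ (Set.univ : Set ℝ))).toReal = a / 2 := fun a ha =>
    hXval _ measurableSet_Ioc _ ha.1 (hIocVol a ha)
  have hIocY : ∀ b : ℝ, b ∈ Set.Icc (0 : ℝ) 1 →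
      (μ ((Set.univ : Set ℝ) ×ˢ Set.Ioc 0 b)).toReal = b / 2 := fun b hb =>
    hYval _ measurableSet_Ioc _ hb.1 (hIocVol b hb)
  -- rectangle flip equalities
  have hflipX' : ∀ (c : ℝ) (T : Set ℝ), MeasurableSet T →
      μ (Set.Iic c ×ˢ T) = μ (Set.Ici (-c) ×ˢ T) := by
    intro c T hT
    rw [hflipX _ _ measurableSet_Iic hT, hpreIic]
  have hflipY' : ∀ (S : Set ℝ) (c : ℝ), MeasurableSet S →
      μ (S ×ˢ Set.Iic c) = μ (S ×ˢ Set.Ici (-c)) := by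
    intro S c hS
    rw [hflipY _ _ hS measurableSet_Iic, hpreIic]
  -- left halves
  have hhalfX : ∀ T : Set ℝ, MeasurableSet T →
      (μ (Set.Iic (0 : ℝ) ×ˢ T)).toReal = (μ ((Set.univ : Set ℝ) ×ˢ T)).toReal / 2 := by
    intro T hT
    have e1 : μ (Set.Iic (0 : ℝ) ×ˢ T) = μ (Set.Ioi (0 : ℝ) ×ˢ T) := by
      calc μ (Set.Iic (0 : ℝ) ×ˢ T) = μ (Set.Ici (-(0 : ℝ)) ×ˢ T) := hflipX' 0 T hT
        _ = μ (Set.Ici (0 : ℝ) ×ˢ T) := by norm_num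
        _ = μ (Set.Ioi (0 : ℝ) ×ˢ T) := hswapX _ _ _ 0 (hIciIoi 0)
    have e2 : (Set.univ : Set ℝ) ×ˢ T = (Set.Iic 0 ×ˢ T) ∪ (Set.Ioi 0 ×ˢ T) := by
      rw [← Set.union_prod, Set.Iic_union_Ioi]
    have e3 := hadd (Set.Iic 0 ×ˢ T) (Set.Ioi 0 ×ˢ T) (measurableSet_Ioi.prod hT)
      (Set.Disjoint.set_prod_left (Set.Iic_disjoint_Ioi le_rfl) _ _)
    rw [e2, e3, ← e1]; ring
  have hhalfY : ∀ S : Set ℝ, MeasurableSet S →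
      (μ (S ×ˢ Set.Iic (0 : ℝ))).toReal = (μ (S ×ˢ (Set.univ : Set ℝ))).toReal / 2 := by
    intro S hS
    have e1 : μ (S ×ˢ Set.Iic (0 : ℝ)) = μ (S ×ˢ Set.Ioi (0 : ℝ)) := by
      calc μ (S ×ˢ Set.Iic (0 : ℝ)) = μ (S ×ˢ Set.Ici (-(0 : ℝ))) := hflipY' S 0 hS
        _ = μ (S ×ˢ Set.Ici (0 : ℝ)) := by norm_num
        _ = μ (S ×ˢ Set.Ioi (0 : ℝ)) := hswapY _ _ _ 0 (hIciIoi 0)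
    have e2 : S ×ˢ (Set.univ : Set ℝ) = (S ×ˢ Set.Iic 0) ∪ (S ×ˢ Set.Ioi 0) := by
      rw [← Set.prod_union, Set.Iic_union_Ioi]
    have e3 := hadd (S ×ˢ Set.Iic 0) (S ×ˢ Set.Ioi 0) (hS.prod measurableSet_Ioi)
      (Set.Disjoint.set_prod_right (Set.Iic_disjoint_Ioi le_rfl) _ _)
    rw [e2, e3, ← e1]; ring
  -- basic quadrant values
  have hQ00 : (μ (Set.Iic (0 : ℝ) ×ˢ Set.Iic (0 : ℝ))).toReal = 1 / 4 := by
    rw [hhalfX _ measurableSet_Iic, hIicY 0 (by norm_num)]; norm_num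
  have hA : ∀ a : ℝ, a ∈ Set.Icc (0 : ℝ) 1 →
      (μ (Set.Ioc 0 a ×ˢ Set.Iic (0 : ℝ))).toReal = a / 4 := by
    intro a ha
    rw [hhalfY _ measurableSet_Ioc, hIocX a ha]; ring
  have hB : ∀ b : ℝ, b ∈ Set.Icc (0 : ℝ) 1 →
      (μ (Set.Iic (0 : ℝ) ×ˢ Set.Ioc 0 b)).toReal = b / 4 := by
    intro b hb
    rw [hhalfX _ measurableSet_Ioc, hIocY b hb]; ring
  have hC : ∀ b : ℝ, b ∈ Set.Icc (0 : ℝ) 1 →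
      (μ (Set.Iic (0 : ℝ) ×ˢ Set.Iic (-b))).toReal = (1 - b) / 4 := by
    intro b hb
    obtain ⟨hb0, hb1⟩ := hb
    rw [hhalfX _ measurableSet_Iic, hIicY (-b) ⟨by linarith, by linarith⟩]; ring
  have hD : ∀ a : ℝ, a ∈ Set.Icc (0 : ℝ) 1 →
      (μ (Set.Iic (-a) ×ˢ Set.Iic (0 : ℝ))).toReal = (1 - a) / 4 := by
    intro a ha
    obtain ⟨ha0, ha1⟩ := ha
    rw [hhalfY _ measurableSet_Iic, hIicX (-a) ⟨by linarith, by linarith⟩]; ring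
  -- positive quarter strips
  have hA2 : ∀ a : ℝ, a ∈ Set.Icc (0 : ℝ) 1 →
      (μ (Set.Ioc 0 a ×ˢ Set.Ioi (0 : ℝ))).toReal = a / 4 := by
    intro a ha
    have e1 : μ (Set.Ioc (0 : ℝ) a ×ˢ Set.Iic (0 : ℝ)) = μ (Set.Ioc 0 a ×ˢ Set.Ioi 0) := by
      calc μ (Set.Ioc (0 : ℝ) a ×ˢ Set.Iic (0 : ℝ))
          = μ (Set.Ioc 0 a ×ˢ Set.Ici (-(0 : ℝ))) := hflipY' _ 0 measurableSet_Ioc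
        _ = μ (Set.Ioc 0 a ×ˢ Set.Ici (0 : ℝ)) := by norm_num
        _ = μ (Set.Ioc 0 a ×ˢ Set.Ioi (0 : ℝ)) := hswapY _ _ _ 0 (hIciIoi 0)
    rw [← e1]; exact hA a ha
  have hB2 : ∀ b : ℝ, b ∈ Set.Icc (0 : ℝ) 1 →
      (μ (Set.Ioi (0 : ℝ) ×ˢ Set.Ioc 0 b)).toReal = b / 4 := by
    intro b hb
    have e1 : μ (Set.Iic (0 : ℝ) ×ˢ Set.Ioc (0 : ℝ) b) = μ (Set.Ioi 0 ×ˢ Set.Ioc 0 b) := by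
      calc μ (Set.Iic (0 : ℝ) ×ˢ Set.Ioc (0 : ℝ) b)
          = μ (Set.Ici (-(0 : ℝ)) ×ˢ Set.Ioc 0 b) := hflipX' 0 _ measurableSet_Ioc
        _ = μ (Set.Ici (0 : ℝ) ×ˢ Set.Ioc 0 b) := by norm_num
        _ = μ (Set.Ioi (0 : ℝ) ×ˢ Set.Ioc 0 b) := hswapX _ _ _ 0 (hIciIoi 0)
    rw [← e1]; exact hB b hb
  -- tail strips
  have hE : ∀ a b : ℝ, a ∈ Set.Icc (0 : ℝ) 1 → b ∈ Set.Icc (0 : ℝ) 1 →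
      (μ (Set.Ioc 0 a ×ˢ Set.Ioi b)).toReal
        = a / 4 - (μ (Set.Ioc 0 a ×ˢ Set.Ioc 0 b)).toReal := by
    intro a b ha hb
    have e2 : (Set.Ioc (0 : ℝ) a ×ˢ Set.Ioi (0 : ℝ))
        = (Set.Ioc 0 a ×ˢ Set.Ioc 0 b) ∪ (Set.Ioc 0 a ×ˢ Set.Ioi b) := by
      rw [← Set.prod_union, Set.Ioc_union_Ioi_eq_Ioi hb.1]
    have e3 := hadd (Set.Ioc 0 a ×ˢ Set.Ioc 0 b) (Set.Ioc 0 a ×ˢ Set.Ioi b)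
      (measurableSet_Ioc.prod measurableSet_Ioi)
      (Set.Disjoint.set_prod_right (Set.Ioc_disjoint_Ioi le_rfl) _ _)
    have e4 := hA2 a ha
    rw [e2, e3] at e4
    linarith
  have hF : ∀ a b : ℝ, a ∈ Set.Icc (0 : ℝ) 1 → b ∈ Set.Icc (0 : ℝ) 1 →
      (μ (Set.Ioi a ×ˢ Set.Ioc 0 b)).toReal
        = b / 4 - (μ (Set.Ioc 0 a ×ˢ Set.Ioc 0 b)).toReal := by
    intro a b ha hb
    have e2 : (Set.Ioi (0 : ℝ) ×ˢ Set.Ioc (0 : ℝ) b)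
        = (Set.Ioc 0 a ×ˢ Set.Ioc 0 b) ∪ (Set.Ioi a ×ˢ Set.Ioc 0 b) := by
      rw [← Set.union_prod, Set.Ioc_union_Ioi_eq_Ioi ha.1]
    have e3 := hadd (Set.Ioc 0 a ×ˢ Set.Ioc 0 b) (Set.Ioi a ×ˢ Set.Ioc 0 b)
      (measurableSet_Ioi.prod measurableSet_Ioc)
      (Set.Disjoint.set_prod_left (Set.Ioc_disjoint_Ioi le_rfl) _ _)
    have e4 := hB2 b hb
    rw [e2, e3] at e4
    linarith
  -- upper-right quadrant
  have hYIoi : (μ ((Set.univ : Set ℝ) ×ˢ Set.Ioi (0 : ℝ))).toReal = 1 / 2 := by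
    refine hYval _ measurableSet_Ioi 1 (by norm_num) ?_
    have h1 : Set.Ioi (0 : ℝ) ∩ Set.Icc (-1 : ℝ) 1 = Set.Ioc 0 1 := by
      ext r
      simp only [Set.mem_inter_iff, Set.mem_Ioi, Set.mem_Icc, Set.mem_Ioc]
      constructor
      · rintro ⟨h, _, h2⟩; exact ⟨h, h2⟩
      · rintro ⟨h1', h2'⟩; exact ⟨h1', by linarith, h2'⟩
    rw [h1, Real.volume_Ioc]
    norm_num
  have hQ11 : (μ (Set.Ioi (0 : ℝ) ×ˢ Set.Ioi (0 : ℝ))).toReal = 1 / 4 := by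
    have e2 : (Set.univ : Set ℝ) ×ˢ Set.Ioi (0 : ℝ)
        = (Set.Iic 0 ×ˢ Set.Ioi 0) ∪ (Set.Ioi 0 ×ˢ Set.Ioi 0) := by
      rw [← Set.union_prod, Set.Iic_union_Ioi]
    have e3 := hadd (Set.Iic 0 ×ˢ Set.Ioi 0) (Set.Ioi 0 ×ˢ Set.Ioi 0)
      (measurableSet_Ioi.prod measurableSet_Ioi)
      (Set.Disjoint.set_prod_left (Set.Iic_disjoint_Ioi le_rfl) _ _)
    have e4 : (μ (Set.Iic (0 : ℝ) ×ˢ Set.Ioi (0 : ℝ))).toReal = 1 / 4 := by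
      rw [hhalfX _ measurableSet_Ioi, hYIoi]; norm_num
    have e5 := hYIoi
    rw [e2, e3, e4] at e5
    linarith
  -- main rectangle formulas
  have hF4 : ∀ a b : ℝ, a ∈ Set.Icc (0 : ℝ) 1 → b ∈ Set.Icc (0 : ℝ) 1 →
      (μ (Set.Iic a ×ˢ Set.Iic b)).toReal
        = (a + b + 1) / 4 + (μ (Set.Ioc 0 a ×ˢ Set.Ioc 0 b)).toReal := by
    intro a b ha hb
    have d1 : Set.Iic a ×ˢ Set.Iic b
        = (Set.Iic 0 ×ˢ Set.Iic b) ∪ (Set.Ioc 0 a ×ˢ Set.Iic b) := by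
      rw [← Set.union_prod, Set.Iic_union_Ioc_eq_Iic ha.1]
    have d2 : Set.Iic (0 : ℝ) ×ˢ Set.Iic b
        = (Set.Iic 0 ×ˢ Set.Iic 0) ∪ (Set.Iic 0 ×ˢ Set.Ioc 0 b) := by
      rw [← Set.prod_union, Set.Iic_union_Ioc_eq_Iic hb.1]
    have d3 : Set.Ioc (0 : ℝ) a ×ˢ Set.Iic b
        = (Set.Ioc 0 a ×ˢ Set.Iic 0) ∪ (Set.Ioc 0 a ×ˢ Set.Ioc 0 b) := by
      rw [← Set.prod_union, Set.Iic_union_Ioc_eq_Iic hb.1]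
    have e1 := hadd (Set.Iic 0 ×ˢ Set.Iic b) (Set.Ioc 0 a ×ˢ Set.Iic b)
      (measurableSet_Ioc.prod measurableSet_Iic)
      (Set.Disjoint.set_prod_left (Set.Iic_disjoint_Ioc le_rfl) _ _)
    have e2 := hadd (Set.Iic 0 ×ˢ Set.Iic 0) (Set.Iic 0 ×ˢ Set.Ioc 0 b)
      (measurableSet_Iic.prod measurableSet_Ioc)
      (Set.Disjoint.set_prod_right (Set.Iic_disjoint_Ioc le_rfl) _ _)
    have e3 := hadd (Set.Ioc 0 a ×ˢ Set.Iic 0) (Set.Ioc 0 a ×ˢ Set.Ioc 0 b)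
      (measurableSet_Ioc.prod measurableSet_Ioc)
      (Set.Disjoint.set_prod_right (Set.Iic_disjoint_Ioc le_rfl) _ _)
    rw [d1, e1, d2, e2, d3, e3, hQ00, hB b hb, hA a ha]
    ring
  have hF5 : ∀ a b : ℝ, a ∈ Set.Icc (0 : ℝ) 1 → b ∈ Set.Icc (0 : ℝ) 1 →
      (μ (Set.Iic a ×ˢ Set.Iic (-b))).toReal
        = (a - b + 1) / 4 - (μ (Set.Ioc 0 a ×ˢ Set.Ioc 0 b)).toReal := by
    intro a b ha hb
    have d1 : Set.Iic a ×ˢ Set.Iic (-b)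
        = (Set.Iic 0 ×ˢ Set.Iic (-b)) ∪ (Set.Ioc 0 a ×ˢ Set.Iic (-b)) := by
      rw [← Set.union_prod, Set.Iic_union_Ioc_eq_Iic ha.1]
    have e1 := hadd (Set.Iic 0 ×ˢ Set.Iic (-b)) (Set.Ioc 0 a ×ˢ Set.Iic (-b))
      (measurableSet_Ioc.prod measurableSet_Iic)
      (Set.Disjoint.set_prod_left (Set.Iic_disjoint_Ioc le_rfl) _ _)
    have e2 : μ (Set.Ioc (0 : ℝ) a ×ˢ Set.Iic (-b)) = μ (Set.Ioc 0 a ×ˢ Set.Ioi b) := by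
      calc μ (Set.Ioc (0 : ℝ) a ×ˢ Set.Iic (-b))
          = μ (Set.Ioc 0 a ×ˢ Set.Ici (-(-b))) := hflipY' _ (-b) measurableSet_Ioc
        _ = μ (Set.Ioc 0 a ×ˢ Set.Ici b) := by rw [neg_neg]
        _ = μ (Set.Ioc 0 a ×ˢ Set.Ioi b) := hswapY _ _ _ b (hIciIoi b)
    rw [d1, e1, e2, hC b hb]
    have := hE a b ha hb
    linarith
  have hF6 : ∀ a b : ℝ, a ∈ Set.Icc (0 : ℝ) 1 → b ∈ Set.Icc (0 : ℝ) 1 →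
      (μ (Set.Iic (-a) ×ˢ Set.Iic b)).toReal
        = (b - a + 1) / 4 - (μ (Set.Ioc 0 a ×ˢ Set.Ioc 0 b)).toReal := by
    intro a b ha hb
    have d1 : Set.Iic (-a) ×ˢ Set.Iic b
        = (Set.Iic (-a) ×ˢ Set.Iic 0) ∪ (Set.Iic (-a) ×ˢ Set.Ioc 0 b) := by
      rw [← Set.prod_union, Set.Iic_union_Ioc_eq_Iic hb.1]
    have e1 := hadd (Set.Iic (-a) ×ˢ Set.Iic 0) (Set.Iic (-a) ×ˢ Set.Ioc 0 b)
      (measurableSet_Iic.prod measurableSet_Ioc)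
      (Set.Disjoint.set_prod_right (Set.Iic_disjoint_Ioc le_rfl) _ _)
    have e2 : μ (Set.Iic (-a) ×ˢ Set.Ioc (0 : ℝ) b) = μ (Set.Ioi a ×ˢ Set.Ioc 0 b) := by
      calc μ (Set.Iic (-a) ×ˢ Set.Ioc (0 : ℝ) b)
          = μ (Set.Ici (-(-a)) ×ˢ Set.Ioc 0 b) := hflipX' (-a) _ measurableSet_Ioc
        _ = μ (Set.Ici a ×ˢ Set.Ioc 0 b) := by rw [neg_neg]
        _ = μ (Set.Ioi a ×ˢ Set.Ioc 0 b) := hswapX _ _ _ a (hIciIoi a)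
    rw [d1, e1, e2, hD a ha]
    have := hF a b ha hb
    linarith
  have hF7 : ∀ a b : ℝ, a ∈ Set.Icc (0 : ℝ) 1 → b ∈ Set.Icc (0 : ℝ) 1 →
      (μ (Set.Iic (-a) ×ˢ Set.Iic (-b))).toReal
        = (1 - a - b) / 4 + (μ (Set.Ioc 0 a ×ˢ Set.Ioc 0 b)).toReal := by
    intro a b ha hb
    have e0 : μ (Set.Iic (-a) ×ˢ Set.Iic (-b)) = μ (Set.Ioi a ×ˢ Set.Ioi b) := by
      calc μ (Set.Iic (-a) ×ˢ Set.Iic (-b))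
          = μ (Set.Ici (-(-a)) ×ˢ Set.Iic (-b)) := hflipX' (-a) _ measurableSet_Iic
        _ = μ (Set.Ici a ×ˢ Set.Iic (-b)) := by rw [neg_neg]
        _ = μ (Set.Ioi a ×ˢ Set.Iic (-b)) := hswapX _ _ _ a (hIciIoi a)
        _ = μ (Set.Ioi a ×ˢ Set.Ici (-(-b))) := hflipY' _ (-b) measurableSet_Ioi
        _ = μ (Set.Ioi a ×ˢ Set.Ici b) := by rw [neg_neg]
        _ = μ (Set.Ioi a ×ˢ Set.Ioi b) := hswapY _ _ _ b (hIciIoi b)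
    have d1 : Set.Ioi (0 : ℝ) ×ˢ Set.Ioi (0 : ℝ)
        = (Set.Ioc 0 a ×ˢ Set.Ioi 0) ∪ (Set.Ioi a ×ˢ Set.Ioi 0) := by
      rw [← Set.union_prod, Set.Ioc_union_Ioi_eq_Ioi ha.1]
    have e1 := hadd (Set.Ioc 0 a ×ˢ Set.Ioi 0) (Set.Ioi a ×ˢ Set.Ioi 0)
      (measurableSet_Ioi.prod measurableSet_Ioi)
      (Set.Disjoint.set_prod_left (Set.Ioc_disjoint_Ioi le_rfl) _ _)
    have d2 : Set.Ioi a ×ˢ Set.Ioi (0 : ℝ)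
        = (Set.Ioi a ×ˢ Set.Ioc 0 b) ∪ (Set.Ioi a ×ˢ Set.Ioi b) := by
      rw [← Set.prod_union, Set.Ioc_union_Ioi_eq_Ioi hb.1]
    have e2 := hadd (Set.Ioi a ×ˢ Set.Ioc 0 b) (Set.Ioi a ×ˢ Set.Ioi b)
      (measurableSet_Ioi.prod measurableSet_Ioi)
      (Set.Disjoint.set_prod_right (Set.Ioc_disjoint_Ioi le_rfl) _ _)
    have q := hQ11
    rw [d1, e1, d2, e2, hA2 a ha] at q
    have h1 := hF a b ha hb
    rw [e0]
    linarith
  -- Icc to Ioc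
  have hIccIoc0 : ∀ a : ℝ, Set.Icc (0 : ℝ) a ∪ {0} = Set.Ioc 0 a ∪ {0} := by
    intro a
    ext r
    simp only [Set.mem_union, Set.mem_Icc, Set.mem_Ioc, Set.mem_singleton_iff]
    constructor
    · rintro (⟨h1, h2⟩ | h)
      · rcases lt_or_eq_of_le h1 with h' | h'
        · exact Or.inl ⟨h', h2⟩
        · exact Or.inr h'.symm
      · exact Or.inr h
    · rintro (⟨h1, h2⟩ | h)
      · exact Or.inl ⟨h1.le, h2⟩
      · exact Or.inr h
  have hIccIoc : ∀ a b : ℝ,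
      μ (Set.Icc 0 a ×ˢ Set.Icc 0 b) = μ (Set.Ioc 0 a ×ˢ Set.Ioc 0 b) := by
    intro a b
    calc μ (Set.Icc 0 a ×ˢ Set.Icc 0 b)
        = μ (Set.Ioc 0 a ×ˢ Set.Icc 0 b) := hswapX _ _ _ 0 (hIccIoc0 a)
      _ = μ (Set.Ioc 0 a ×ˢ Set.Ioc 0 b) := hswapY _ _ _ 0 (hIccIoc0 b)
  -- final case analysis
  intro x hx y hy
  obtain ⟨hx1, hx2⟩ := hx
  obtain ⟨hy1, hy2⟩ := hy
  have hsets1 : {p : ℝ × ℝ | p.1 ≤ x ∧ p.2 ≤ y} = Set.Iic x ×ˢ Set.Iic y := rfl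
  have hsets2 : {p : ℝ × ℝ | 0 ≤ p.1 ∧ p.1 ≤ |x| ∧ 0 ≤ p.2 ∧ p.2 ≤ |y|}
      = Set.Icc 0 |x| ×ˢ Set.Icc 0 |y| := by
    ext p
    simp only [Set.mem_setOf_eq, Set.mem_prod, Set.mem_Icc]
    tauto
  rw [hsets1, hsets2]
  rcases le_or_gt 0 x with hx0 | hx0 <;> rcases le_or_gt 0 y with hy0 | hy0
  · -- x ≥ 0, y ≥ 0
    rw [abs_of_nonneg hx0, abs_of_nonneg hy0, hIccIoc x y,
      hF4 x y ⟨hx0, hx2⟩ ⟨hy0, hy2⟩]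
    rcases lt_or_eq_of_le hx0 with hx0' | hx0'
    · rcases lt_or_eq_of_le hy0 with hy0' | hy0'
      · rw [Real.sign_of_pos (mul_pos hx0' hy0')]; ring
      · rw [← hy0', Set.Ioc_self, Set.prod_empty, measure_empty, mul_zero, Real.sign_zero]
        simp
    · rw [← hx0', Set.Ioc_self, Set.empty_prod, measure_empty, zero_mul, Real.sign_zero]
      simp
  · -- x ≥ 0, y < 0
    have hy0' : -y ∈ Set.Icc (0 : ℝ) 1 := ⟨by linarith, by linarith⟩
    have h5 := hF5 x (-y) ⟨hx0, hx2⟩ hy0'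
    rw [neg_neg] at h5
    rw [abs_of_nonneg hx0, abs_of_neg hy0, hIccIoc x (-y), h5]
    rcases lt_or_eq_of_le hx0 with hx0' | hx0'
    · rw [Real.sign_of_neg (mul_neg_of_pos_of_neg hx0' hy0)]
      ring
    · rw [← hx0', Set.Ioc_self, Set.empty_prod, measure_empty, zero_mul, Real.sign_zero]
      simp
  · -- x < 0, y ≥ 0
    have hx0' : -x ∈ Set.Icc (0 : ℝ) 1 := ⟨by linarith, by linarith⟩
    have h6 := hF6 (-x) y hx0' ⟨hy0, hy2⟩
    rw [neg_neg] at h6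
    rw [abs_of_neg hx0, abs_of_nonneg hy0, hIccIoc (-x) y, h6]
    rcases lt_or_eq_of_le hy0 with hy0' | hy0'
    · rw [Real.sign_of_neg (mul_neg_of_neg_of_pos hx0 hy0')]
      ring
    · rw [← hy0', Set.Ioc_self, Set.prod_empty, measure_empty, mul_zero, Real.sign_zero]
      simp
  · -- x < 0, y < 0
    have hx0' : -x ∈ Set.Icc (0 : ℝ) 1 := ⟨by linarith, by linarith⟩
    have hy0' : -y ∈ Set.Icc (0 : ℝ) 1 := ⟨by linarith, by linarith⟩
    have h7 := hF7 (-x) (-y) hx0' hy0'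
    rw [neg_neg, neg_neg] at h7
    rw [abs_of_neg hx0, abs_of_neg hy0, hIccIoc (-x) (-y), h7,
      Real.sign_of_pos (mul_pos_of_neg_of_neg hx0 hy0)]
    ring
end

section
/- If (X,Y) is uniformly distributed on the open unit disk and U = X/√(1-Y²), V = Y/√(1-X²), then (U,V) has joint density f(u,v) = (1/π)·√((1-u²)(1-v²))/(1-u²v²)² on (-1,1)². -/
open MeasureTheory Real Set

noncomputable def Lrow (a b : ℝ) : ℝ × ℝ →L[ℝ] ℝ :=
  a • ContinuousLinearMap.fst ℝ ℝ ℝ + b • ContinuousLinearMap.snd ℝ ℝ ℝ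

@[simp] lemma Lrow_apply (a b : ℝ) (z : ℝ × ℝ) : Lrow a b z = a * z.1 + b * z.2 := by
  simp [Lrow]

noncomputable def gmap (q : ℝ × ℝ) : ℝ × ℝ :=
  (q.1 * Real.sqrt (1 - q.2^2) / Real.sqrt (1 - q.1^2*q.2^2),
   q.2 * Real.sqrt (1 - q.1^2) / Real.sqrt (1 - q.1^2*q.2^2))

noncomputable def gD (q : ℝ × ℝ) : ℝ × ℝ →L[ℝ] ℝ × ℝ :=
  (Lrow (Real.sqrt (1-q.2^2) / Real.sqrt (1-q.1^2*q.2^2)^3)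
        (-(q.1*q.2*(1-q.1^2)) / (Real.sqrt (1-q.2^2) * Real.sqrt (1-q.1^2*q.2^2)^3))).prod
  (Lrow (-(q.1*q.2*(1-q.2^2)) / (Real.sqrt (1-q.1^2) * Real.sqrt (1-q.1^2*q.2^2)^3))
        (Real.sqrt (1-q.1^2) / Real.sqrt (1-q.1^2*q.2^2)^3))

set_option maxHeartbeats 2000000 in
lemma hasFDerivAt_gmap (q : ℝ × ℝ) (h1 : q.1^2 < 1) (h2 : q.2^2 < 1) :
    HasFDerivAt gmap (gD q) q := by
  obtain ⟨u, v⟩ := q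
  simp only at h1 h2
  have hB : (0:ℝ) < 1 - u^2 := by linarith
  have hA : (0:ℝ) < 1 - v^2 := by linarith
  have hw : (0:ℝ) < 1 - u^2*v^2 := by nlinarith [sq_nonneg u, sq_nonneg v]
  have hAs : Real.sqrt (1-v^2) ^ 2 = 1 - v^2 := Real.sq_sqrt hA.le
  have hBs : Real.sqrt (1-u^2) ^ 2 = 1 - u^2 := Real.sq_sqrt hB.le
  have hws : Real.sqrt (1-u^2*v^2) ^ 2 = 1 - u^2*v^2 := Real.sq_sqrt hw.le
  have hA0 : Real.sqrt (1-v^2) ≠ 0 := (Real.sqrt_pos.2 hA).ne'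
  have hB0 : Real.sqrt (1-u^2) ≠ 0 := (Real.sqrt_pos.2 hB).ne'
  have hw0 : Real.sqrt (1-u^2*v^2) ≠ 0 := (Real.sqrt_pos.2 hw).ne'
  have hW3 : Real.sqrt (1-u^2*v^2) ^ 3 = (1-u^2*v^2) * Real.sqrt (1-u^2*v^2) := by
    rw [pow_succ, hws]
  have hA3 : Real.sqrt (1-v^2) ^ 3 = (1-v^2) * Real.sqrt (1-v^2) := by
    rw [pow_succ, hAs]
  have hB3 : Real.sqrt (1-u^2) ^ 3 = (1-u^2) * Real.sqrt (1-u^2) := by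
    rw [pow_succ, hBs]
  have hcm : ((1:ℝ) - v^2*u^2) = 1 - u^2*v^2 := by ring
  have hsqc : Real.sqrt (1-v^2*u^2) = Real.sqrt (1-u^2*v^2) := by rw [hcm]
  have hws' : Real.sqrt (1-v^2*u^2) ^ 2 = 1 - u^2*v^2 := by rw [hcm]; exact hws
  have hW3' : Real.sqrt (1-v^2*u^2) ^ 3 = (1-u^2*v^2) * Real.sqrt (1-v^2*u^2) := by
    rw [pow_succ, hws']
  have hinner : HasFDerivAt (fun z : ℝ×ℝ => 1 - z.1^2*z.2^2)
      (Lrow (-(2*u*v^2)) (-(2*u^2*v))) ((u, v) : ℝ×ℝ) := by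
    have h := (hasFDerivAt_const (𝕜 := ℝ) (1:ℝ) ((u,v) : ℝ×ℝ)).sub
      (((hasFDerivAt_fst (p := ((u,v):ℝ×ℝ))).mul hasFDerivAt_fst).mul
        ((hasFDerivAt_snd (p := ((u,v):ℝ×ℝ))).mul hasFDerivAt_snd))
    simp only [pow_two]
    refine h.congr_fderiv ?_
    apply ContinuousLinearMap.ext
    intro z
    simp
    ring
  have hinnA : HasFDerivAt (fun z : ℝ×ℝ => 1 - z.2^2) (Lrow 0 (-(2*v))) ((u,v) : ℝ×ℝ) := by
    have h := (hasFDerivAt_const (𝕜 := ℝ) (1:ℝ) ((u,v) : ℝ×ℝ)).sub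
      ((hasFDerivAt_snd (p := ((u,v):ℝ×ℝ))).mul hasFDerivAt_snd)
    simp only [pow_two]
    refine h.congr_fderiv ?_
    apply ContinuousLinearMap.ext
    intro z
    simp
    ring
  have hinnB : HasFDerivAt (fun z : ℝ×ℝ => 1 - z.1^2) (Lrow (-(2*u)) 0) ((u,v) : ℝ×ℝ) := by
    have h := (hasFDerivAt_const (𝕜 := ℝ) (1:ℝ) ((u,v) : ℝ×ℝ)).sub
      ((hasFDerivAt_fst (p := ((u,v):ℝ×ℝ))).mul hasFDerivAt_fst)
    simp only [pow_two]
    refine h.congr_fderiv ?_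
    apply ContinuousLinearMap.ext
    intro z
    simp
    ring
  have hsA : HasFDerivAt (fun z : ℝ×ℝ => Real.sqrt (1 - z.2^2))
      ((1/(2*Real.sqrt (1-v^2))) • Lrow 0 (-(2*v))) ((u,v) : ℝ×ℝ) := hinnA.sqrt hA.ne'
  have hsB : HasFDerivAt (fun z : ℝ×ℝ => Real.sqrt (1 - z.1^2))
      ((1/(2*Real.sqrt (1-u^2))) • Lrow (-(2*u)) 0) ((u,v) : ℝ×ℝ) := hinnB.sqrt hB.ne'
  have hφ : HasDerivAt (fun t : ℝ => (Real.sqrt t)⁻¹)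
      (-(1/(2*Real.sqrt (1-u^2*v^2))) / Real.sqrt (1-u^2*v^2)^2) (1-u^2*v^2) :=
    (Real.hasDerivAt_sqrt hw.ne').inv hw0
  have hWinv : HasFDerivAt (fun z : ℝ×ℝ => (Real.sqrt (1 - z.1^2*z.2^2))⁻¹)
      ((-(1/(2*Real.sqrt (1-u^2*v^2))) / Real.sqrt (1-u^2*v^2)^2) •
        Lrow (-(2*u*v^2)) (-(2*u^2*v))) ((u,v) : ℝ×ℝ) :=
    by have := hφ.comp_hasFDerivAt ((u,v) : ℝ×ℝ) hinner; exact this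
  have hg1 := ((hasFDerivAt_fst (p := ((u,v):ℝ×ℝ))).mul hsA).mul hWinv
  have hg2 := ((hasFDerivAt_snd (p := ((u,v):ℝ×ℝ))).mul hsB).mul hWinv
  have H := hg1.prodMk hg2
  have he : gmap = fun z : ℝ×ℝ =>
      (z.1 * Real.sqrt (1 - z.2^2) * (Real.sqrt (1 - z.1^2*z.2^2))⁻¹,
       z.2 * Real.sqrt (1 - z.1^2) * (Real.sqrt (1 - z.1^2*z.2^2))⁻¹) := by
    funext z; simp [gmap, div_eq_mul_inv]
  rw [he]
  refine H.congr_fderiv ?_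
  apply ContinuousLinearMap.ext
  intro z
  refine Prod.ext ?_ ?_
  · simp only [gD, ContinuousLinearMap.prod_apply, ContinuousLinearMap.add_apply,
      ContinuousLinearMap.smul_apply, Lrow_apply,
      ContinuousLinearMap.coe_fst', ContinuousLinearMap.coe_snd', smul_eq_mul, Pi.mul_apply]
    rw [hW3, hws]
    field_simp
    ring_nf
    simp only [hsqc, hA3, hB3, hW3, hAs, hBs, hws]
    ring
  · simp only [gD, ContinuousLinearMap.prod_apply, ContinuousLinearMap.add_apply,
      ContinuousLinearMap.smul_apply, Lrow_apply,
      ContinuousLinearMap.coe_fst', ContinuousLinearMap.coe_snd', smul_eq_mul, Pi.mul_apply]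
    rw [hW3, hws]
    have hwne := hw.ne'
    generalize Real.sqrt (1-u^2*v^2) = w at hw0 ⊢
    generalize hk : 1-u^2*v^2 = k at hwne ⊢
    field_simp
    rw [hBs]
    subst hk
    ring


lemma det_Lrow (a b c d : ℝ) : ((Lrow a b).prod (Lrow c d)).det = a * d - b * c := by
  have h : (((Lrow a b).prod (Lrow c d)) : (ℝ×ℝ) →ₗ[ℝ] (ℝ×ℝ))
      = Matrix.toLin (Module.Basis.finTwoProd ℝ) (Module.Basis.finTwoProd ℝ) !![a, b; c, d] := by
    apply LinearMap.ext
    intro z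
    simp [Matrix.toLin_finTwoProd_apply]
  rw [ContinuousLinearMap.det, h, LinearMap.det_toLin, Matrix.det_fin_two_of]

lemma det_gD (q : ℝ × ℝ) (h1 : q.1^2 < 1) (h2 : q.2^2 < 1) :
    (gD q).det = Real.sqrt ((1-q.1^2)*(1-q.2^2)) / (1-q.1^2*q.2^2)^2 := by
  obtain ⟨u, v⟩ := q
  simp only at h1 h2
  have hB : (0:ℝ) < 1 - u^2 := by linarith
  have hA : (0:ℝ) < 1 - v^2 := by linarith
  have hw : (0:ℝ) < 1 - u^2*v^2 := by nlinarith [sq_nonneg u, sq_nonneg v]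
  have hAs : Real.sqrt (1-v^2) ^ 2 = 1 - v^2 := Real.sq_sqrt hA.le
  have hBs : Real.sqrt (1-u^2) ^ 2 = 1 - u^2 := Real.sq_sqrt hB.le
  have hws : Real.sqrt (1-u^2*v^2) ^ 2 = 1 - u^2*v^2 := Real.sq_sqrt hw.le
  have hA0 : Real.sqrt (1-v^2) ≠ 0 := (Real.sqrt_pos.2 hA).ne'
  have hB0 : Real.sqrt (1-u^2) ≠ 0 := (Real.sqrt_pos.2 hB).ne'
  have hw0 : Real.sqrt (1-u^2*v^2) ≠ 0 := (Real.sqrt_pos.2 hw).ne'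
  have hA3 : Real.sqrt (1-v^2) ^ 3 = (1-v^2) * Real.sqrt (1-v^2) := by rw [pow_succ, hAs]
  have hB3 : Real.sqrt (1-u^2) ^ 3 = (1-u^2) * Real.sqrt (1-u^2) := by rw [pow_succ, hBs]
  have hW3 : Real.sqrt (1-u^2*v^2) ^ 3 = (1-u^2*v^2) * Real.sqrt (1-u^2*v^2) := by
    rw [pow_succ, hws]
  have hA4 : Real.sqrt (1-v^2) ^ 4 = (1-v^2)^2 := by
    rw [show (4:ℕ) = 2*2 from rfl, pow_mul, hAs]
  have hB4 : Real.sqrt (1-u^2) ^ 4 = (1-u^2)^2 := by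
    rw [show (4:ℕ) = 2*2 from rfl, pow_mul, hBs]
  have hW4 : Real.sqrt (1-u^2*v^2) ^ 4 = (1-u^2*v^2)^2 := by
    rw [show (4:ℕ) = 2*2 from rfl, pow_mul, hws]
  have hW6 : Real.sqrt (1-u^2*v^2) ^ 6 = (1-u^2*v^2)^3 := by
    rw [show (6:ℕ) = 2*3 from rfl, pow_mul, hws]
  have hW8 : Real.sqrt (1-u^2*v^2) ^ 8 = (1-u^2*v^2)^4 := by
    rw [show (8:ℕ) = 2*4 from rfl, pow_mul, hws]
  have hW5 : Real.sqrt (1-u^2*v^2) ^ 5 = (1-u^2*v^2)^2 * Real.sqrt (1-u^2*v^2) := by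
    rw [pow_succ, hW4]
  have hW7 : Real.sqrt (1-u^2*v^2) ^ 7 = (1-u^2*v^2)^3 * Real.sqrt (1-u^2*v^2) := by
    rw [pow_succ, hW6]
  have hA5 : Real.sqrt (1-v^2) ^ 5 = (1-v^2)^2 * Real.sqrt (1-v^2) := by
    rw [pow_succ, hA4]
  have hA6 : Real.sqrt (1-v^2) ^ 6 = (1-v^2)^3 := by
    rw [show (6:ℕ) = 2*3 from rfl, pow_mul, hAs]
  have hA7 : Real.sqrt (1-v^2) ^ 7 = (1-v^2)^3 * Real.sqrt (1-v^2) := by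
    rw [pow_succ, hA6]
  have hA8 : Real.sqrt (1-v^2) ^ 8 = (1-v^2)^4 := by
    rw [show (8:ℕ) = 2*4 from rfl, pow_mul, hAs]
  have hA9 : Real.sqrt (1-v^2) ^ 9 = (1-v^2)^4 * Real.sqrt (1-v^2) := by
    rw [pow_succ, hA8]
  have hA10 : Real.sqrt (1-v^2) ^ 10 = (1-v^2)^5 := by
    rw [show (10:ℕ) = 2*5 from rfl, pow_mul, hAs]
  have hA11 : Real.sqrt (1-v^2) ^ 11 = (1-v^2)^5 * Real.sqrt (1-v^2) := by
    rw [pow_succ, hA10]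
  have hA12 : Real.sqrt (1-v^2) ^ 12 = (1-v^2)^6 := by
    rw [show (12:ℕ) = 2*6 from rfl, pow_mul, hAs]
  have hB5 : Real.sqrt (1-u^2) ^ 5 = (1-u^2)^2 * Real.sqrt (1-u^2) := by
    rw [pow_succ, hB4]
  have hB6 : Real.sqrt (1-u^2) ^ 6 = (1-u^2)^3 := by
    rw [show (6:ℕ) = 2*3 from rfl, pow_mul, hBs]
  have hB7 : Real.sqrt (1-u^2) ^ 7 = (1-u^2)^3 * Real.sqrt (1-u^2) := by
    rw [pow_succ, hB6]
  have hB8 : Real.sqrt (1-u^2) ^ 8 = (1-u^2)^4 := by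
    rw [show (8:ℕ) = 2*4 from rfl, pow_mul, hBs]
  have hB9 : Real.sqrt (1-u^2) ^ 9 = (1-u^2)^4 * Real.sqrt (1-u^2) := by
    rw [pow_succ, hB8]
  have hB10 : Real.sqrt (1-u^2) ^ 10 = (1-u^2)^5 := by
    rw [show (10:ℕ) = 2*5 from rfl, pow_mul, hBs]
  have hB11 : Real.sqrt (1-u^2) ^ 11 = (1-u^2)^5 * Real.sqrt (1-u^2) := by
    rw [pow_succ, hB10]
  have hB12 : Real.sqrt (1-u^2) ^ 12 = (1-u^2)^6 := by
    rw [show (12:ℕ) = 2*6 from rfl, pow_mul, hBs]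
  have hW9 : Real.sqrt (1-u^2*v^2) ^ 9 = (1-u^2*v^2)^4 * Real.sqrt (1-u^2*v^2) := by
    rw [pow_succ, hW8]
  have hW10 : Real.sqrt (1-u^2*v^2) ^ 10 = (1-u^2*v^2)^5 := by
    rw [show (10:ℕ) = 2*5 from rfl, pow_mul, hws]
  have hW11 : Real.sqrt (1-u^2*v^2) ^ 11 = (1-u^2*v^2)^5 * Real.sqrt (1-u^2*v^2) := by
    rw [pow_succ, hW10]
  have hW12 : Real.sqrt (1-u^2*v^2) ^ 12 = (1-u^2*v^2)^6 := by
    rw [show (12:ℕ) = 2*6 from rfl, pow_mul, hws]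
  have hsqc : Real.sqrt (1-v^2*u^2) = Real.sqrt (1-u^2*v^2) := by rw [mul_comm]
  have hmul : Real.sqrt ((1-u^2)*(1-v^2)) = Real.sqrt (1-u^2) * Real.sqrt (1-v^2) :=
    Real.sqrt_mul hB.le _
  simp only [gD, det_Lrow]
  rw [hmul]
  rw [hW3]
  field_simp
  simp only [show (1:ℝ) - v^2*u^2 = 1 - u^2*v^2 by ring, hws, hAs, hBs]
  field_simp

noncomputable def fmap (p : ℝ × ℝ) : ℝ × ℝ :=
  (p.1 / Real.sqrt (1 - p.2^2), p.2 / Real.sqrt (1 - p.1^2))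

lemma gmap_mem (p : ℝ × ℝ) (h1 : p.1^2 < 1) (h2 : p.2^2 < 1) :
    (gmap p).1^2 + (gmap p).2^2 < 1 := by
  obtain ⟨u, v⟩ := p
  simp only at h1 h2
  have hB : (0:ℝ) < 1 - u^2 := by linarith
  have hA : (0:ℝ) < 1 - v^2 := by linarith
  have hw : (0:ℝ) < 1 - u^2*v^2 := by nlinarith [sq_nonneg u, sq_nonneg v]
  have hAs : Real.sqrt (1-v^2) ^ 2 = 1 - v^2 := Real.sq_sqrt hA.le
  have hBs : Real.sqrt (1-u^2) ^ 2 = 1 - u^2 := Real.sq_sqrt hB.le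
  have hws : Real.sqrt (1-u^2*v^2) ^ 2 = 1 - u^2*v^2 := Real.sq_sqrt hw.le
  simp only [gmap]
  rw [div_pow, div_pow, mul_pow, mul_pow, hAs, hBs, hws, ← add_div, div_lt_one hw]
  nlinarith

lemma fmap_gmap (p : ℝ × ℝ) (h1 : p.1^2 < 1) (h2 : p.2^2 < 1) : fmap (gmap p) = p := by
  obtain ⟨u, v⟩ := p
  simp only at h1 h2
  have hB : (0:ℝ) < 1 - u^2 := by linarith
  have hA : (0:ℝ) < 1 - v^2 := by linarith
  have hw : (0:ℝ) < 1 - u^2*v^2 := by nlinarith [sq_nonneg u, sq_nonneg v]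
  have hAs : Real.sqrt (1-v^2) ^ 2 = 1 - v^2 := Real.sq_sqrt hA.le
  have hBs : Real.sqrt (1-u^2) ^ 2 = 1 - u^2 := Real.sq_sqrt hB.le
  have hws : Real.sqrt (1-u^2*v^2) ^ 2 = 1 - u^2*v^2 := Real.sq_sqrt hw.le
  have hA0 : Real.sqrt (1-v^2) ≠ 0 := (Real.sqrt_pos.2 hA).ne'
  have hB0 : Real.sqrt (1-u^2) ≠ 0 := (Real.sqrt_pos.2 hB).ne'
  have hw0 : Real.sqrt (1-u^2*v^2) ≠ 0 := (Real.sqrt_pos.2 hw).ne'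
  have key1 : 1 - (v * Real.sqrt (1-u^2) / Real.sqrt (1-u^2*v^2))^2
      = (1-v^2)/(1-u^2*v^2) := by
    rw [div_pow, mul_pow, hBs, hws, eq_div_iff hw.ne', sub_mul, div_mul_cancel₀ _ hw.ne']; ring
  have key2 : 1 - (u * Real.sqrt (1-v^2) / Real.sqrt (1-u^2*v^2))^2
      = (1-u^2)/(1-u^2*v^2) := by
    rw [div_pow, mul_pow, hAs, hws]; field_simp; ring
  simp only [gmap, fmap]
  rw [key1, key2, Real.sqrt_div hA.le, Real.sqrt_div hB.le]
  refine Prod.ext ?_ ?_ <;> (simp only; field_simp)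
  exact mul_div_cancel_right₀ v (by rw [show (1:ℝ) - v^2*u^2 = 1 - u^2*v^2 by ring]; exact hw0)

lemma fmap_mem (p : ℝ × ℝ) (h : p.1^2 + p.2^2 < 1) :
    (fmap p).1^2 < 1 ∧ (fmap p).2^2 < 1 := by
  obtain ⟨x, y⟩ := p
  simp only at h
  have hx : x^2 < 1 := by nlinarith [sq_nonneg y]
  have hy : y^2 < 1 := by nlinarith [sq_nonneg x]
  have hxs : Real.sqrt (1-x^2) ^ 2 = 1 - x^2 := Real.sq_sqrt (by linarith)
  have hys : Real.sqrt (1-y^2) ^ 2 = 1 - y^2 := Real.sq_sqrt (by linarith)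
  simp only [fmap]
  constructor
  · rw [div_pow, hys, div_lt_one (by linarith)]; linarith
  · rw [div_pow, hxs, div_lt_one (by linarith)]; linarith

lemma gmap_fmap (p : ℝ × ℝ) (h : p.1^2 + p.2^2 < 1) : gmap (fmap p) = p := by
  obtain ⟨x, y⟩ := p
  simp only at h
  have hx : x^2 < 1 := by nlinarith [sq_nonneg y]
  have hy : y^2 < 1 := by nlinarith [sq_nonneg x]
  have ht : (0:ℝ) < 1 - x^2 - y^2 := by linarith
  have hxp : (0:ℝ) < 1 - x^2 := by linarith
  have hyp : (0:ℝ) < 1 - y^2 := by linarith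
  have hxs : Real.sqrt (1-x^2) ^ 2 = 1 - x^2 := Real.sq_sqrt hxp.le
  have hys : Real.sqrt (1-y^2) ^ 2 = 1 - y^2 := Real.sq_sqrt hyp.le
  have hx0 : Real.sqrt (1-x^2) ≠ 0 := (Real.sqrt_pos.2 hxp).ne'
  have hy0 : Real.sqrt (1-y^2) ≠ 0 := (Real.sqrt_pos.2 hyp).ne'
  have ht0 : Real.sqrt (1-x^2-y^2) ≠ 0 := (Real.sqrt_pos.2 ht).ne'
  have hu2 : (x / Real.sqrt (1-y^2))^2 = x^2/(1-y^2) := by rw [div_pow, hys]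
  have hv2 : (y / Real.sqrt (1-x^2))^2 = y^2/(1-x^2) := by rw [div_pow, hxs]
  have key1 : 1 - (y / Real.sqrt (1-x^2))^2 = (1-x^2-y^2)/(1-x^2) := by
    rw [hv2]; field_simp; try ring
  have key2 : 1 - (x / Real.sqrt (1-y^2))^2 = (1-x^2-y^2)/(1-y^2) := by
    rw [hu2]; field_simp; try ring
  have key3 : 1 - (x / Real.sqrt (1-y^2))^2 * (y / Real.sqrt (1-x^2))^2
      = (1-x^2-y^2)/((1-x^2)*(1-y^2)) := by
    rw [hu2, hv2]; field_simp; try ring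
  have hm : Real.sqrt ((1-x^2)*(1-y^2)) = Real.sqrt (1-x^2) * Real.sqrt (1-y^2) :=
    Real.sqrt_mul hxp.le _
  simp only [gmap, fmap]
  rw [key1, key2, key3, Real.sqrt_div ht.le, Real.sqrt_div ht.le, Real.sqrt_div ht.le, hm]
  refine Prod.ext ?_ ?_ <;> (simp only; field_simp; try ring)

lemma gmap_measurable : Measurable gmap := by
  have m2 : Measurable fun p : ℝ×ℝ => Real.sqrt (1 - p.2^2) :=
    (Real.continuous_sqrt.comp (by continuity)).measurable
  have m1 : Measurable fun p : ℝ×ℝ => Real.sqrt (1 - p.1^2) :=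
    (Real.continuous_sqrt.comp (by continuity)).measurable
  have mw : Measurable fun p : ℝ×ℝ => Real.sqrt (1 - p.1^2*p.2^2) :=
    (Real.continuous_sqrt.comp (by continuity)).measurable
  exact ((measurable_fst.mul m2).div mw).prodMk ((measurable_snd.mul m1).div mw)

lemma fmap_measurable : Measurable fmap := by
  have m2 : Measurable fun p : ℝ×ℝ => Real.sqrt (1 - p.2^2) :=
    (Real.continuous_sqrt.comp (by continuity)).measurable
  have m1 : Measurable fun p : ℝ×ℝ => Real.sqrt (1 - p.1^2) :=
    (Real.continuous_sqrt.comp (by continuity)).measurable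
  exact (measurable_fst.div m2).prodMk (measurable_snd.div m1)

/-- If (X,Y) is uniform on the open unit disk and U = X/√(1-Y²), V = Y/√(1-X²),
then (U,V) has joint density (1/π)√((1-u²)(1-v²))/(1-u²v²)² on (-1,1)². -/
theorem stmt_15 (μ : Measure (ℝ × ℝ))
    (hμ : μ = (ENNReal.ofReal Real.pi)⁻¹ •
      volume.restrict {p : ℝ × ℝ | p.1 ^ 2 + p.2 ^ 2 < 1}) :
    μ.map (fun p : ℝ × ℝ =>
        (p.1 / Real.sqrt (1 - p.2 ^ 2), p.2 / Real.sqrt (1 - p.1 ^ 2)))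
      = volume.withDensity (fun q : ℝ × ℝ =>
          ENNReal.ofReal (Set.indicator (Set.Ioo (-1 : ℝ) 1 ×ˢ Set.Ioo (-1 : ℝ) 1)
            (fun q => (1 / Real.pi) *
              Real.sqrt ((1 - q.1 ^ 2) * (1 - q.2 ^ 2)) /
                (1 - q.1 ^ 2 * q.2 ^ 2) ^ 2) q)) := by
  set s : Set (ℝ × ℝ) := Set.Ioo (-1 : ℝ) 1 ×ˢ Set.Ioo (-1 : ℝ) 1 with hs_def
  set D : Set (ℝ × ℝ) := {p : ℝ × ℝ | p.1 ^ 2 + p.2 ^ 2 < 1} with hD_def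
  have hss : MeasurableSet s := measurableSet_Ioo.prod measurableSet_Ioo
  have hmem : ∀ x ∈ s, x.1^2 < 1 ∧ x.2^2 < 1 := by
    rintro x ⟨hx1, hx2⟩
    constructor <;> nlinarith [hx1.1, hx1.2, hx2.1, hx2.2]
  have hder : ∀ x ∈ s, HasFDerivWithinAt gmap (gD x) s x := fun x hx =>
    (hasFDerivAt_gmap x (hmem x hx).1 (hmem x hx).2).hasFDerivWithinAt
  have hinj : Set.InjOn gmap s := fun a ha b hb h => by
    rw [← fmap_gmap a (hmem _ ha).1 (hmem _ ha).2, h,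
      fmap_gmap b (hmem _ hb).1 (hmem _ hb).2]
  have himg : gmap '' s = D := by
    ext x
    constructor
    · rintro ⟨p, hp, rfl⟩
      exact gmap_mem p (hmem _ hp).1 (hmem _ hp).2
    · intro hx
      refine ⟨fmap x, ?_, gmap_fmap x hx⟩
      obtain ⟨h1, h2⟩ := fmap_mem x hx
      exact ⟨⟨by nlinarith [sq_nonneg ((fmap x).1 + 1)], by nlinarith [sq_nonneg ((fmap x).1 - 1)]⟩,
        ⟨by nlinarith [sq_nonneg ((fmap x).2 + 1)], by nlinarith [sq_nonneg ((fmap x).2 - 1)]⟩⟩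
  have key := map_withDensity_abs_det_fderiv_eq_addHaar volume hss.nullMeasurableSet hder hinj
  rw [himg] at key
  set J : ℝ × ℝ → ENNReal := fun q => ENNReal.ofReal
    (Real.sqrt ((1 - q.1 ^ 2) * (1 - q.2 ^ 2)) / (1 - q.1 ^ 2 * q.2 ^ 2) ^ 2) with hJ_def
  have hdcongr : ((volume.restrict s).withDensity fun x => ENNReal.ofReal |(gD x).det|)
      = (volume.restrict s).withDensity J := by
    refine withDensity_congr_ae ((ae_restrict_iff' hss).2 (Filter.Eventually.of_forall
      fun q hq => ?_))
    show ENNReal.ofReal |(gD q).det| = J q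
    rw [det_gD q (hmem _ hq).1 (hmem _ hq).2, abs_of_nonneg (by positivity)]
  rw [hdcongr] at key
  set ν : Measure (ℝ × ℝ) := (volume.restrict s).withDensity J with hν_def
  have hν_compl : ν sᶜ = 0 := by
    rw [hν_def, withDensity_apply _ hss.compl, Measure.restrict_restrict hss.compl,
      Set.compl_inter_self, Measure.restrict_empty, lintegral_zero_measure]
  have hmap : Measure.map fmap (volume.restrict D) = ν := by
    rw [← key, Measure.map_map fmap_measurable gmap_measurable]
    have hae : fmap ∘ gmap =ᵐ[ν] id := by
      refine measure_mono_null (fun x hx => ?_) hν_compl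
      simp only [Set.mem_setOf_eq, Set.mem_compl_iff] at *
      intro hxs
      exact hx (fmap_gmap x (hmem _ hxs).1 (hmem _ hxs).2)
    rw [Measure.map_congr hae, Measure.map_id]
  have hfmap_eq : (fun p : ℝ × ℝ =>
      (p.1 / Real.sqrt (1 - p.2 ^ 2), p.2 / Real.sqrt (1 - p.1 ^ 2))) = fmap := rfl
  rw [hμ, hfmap_eq, Measure.map_smul, hmap]
  -- now RHS side
  have hπ : (0:ℝ) < Real.pi := Real.pi_pos
  have hind : (fun q : ℝ × ℝ => ENNReal.ofReal (Set.indicator s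
      (fun q => (1 / Real.pi) * Real.sqrt ((1 - q.1 ^ 2) * (1 - q.2 ^ 2)) /
        (1 - q.1 ^ 2 * q.2 ^ 2) ^ 2) q))
      = Set.indicator s (fun q => (ENNReal.ofReal Real.pi)⁻¹ * J q) := by
    funext q
    by_cases hq : q ∈ s
    · rw [Set.indicator_of_mem hq, Set.indicator_of_mem hq, hJ_def]
      have h2 : (0:ℝ) ≤ Real.sqrt ((1 - q.1 ^ 2) * (1 - q.2 ^ 2)) /
          (1 - q.1 ^ 2 * q.2 ^ 2) ^ 2 := by positivity
      rw [mul_div_assoc, ENNReal.ofReal_mul (by positivity), one_div,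
        ENNReal.ofReal_inv_of_pos hπ]
    · rw [Set.indicator_of_notMem hq, Set.indicator_of_notMem hq, ENNReal.ofReal_zero]
  rw [hind, withDensity_indicator hss]
  rw [show (fun q : ℝ × ℝ => (ENNReal.ofReal Real.pi)⁻¹ * J q)
      = (ENNReal.ofReal Real.pi)⁻¹ • J from rfl]
  rw [withDensity_smul' _ _ (by simp; exact hπ)]
end

section
/- For 0 ≤ u, v ≤ 1 with (u,v) ≠ (1,1), the area of the intersection of the two ellipses E₁(u) = {(x,y) : x²/u² + y² ≤ 1} and E₂(v) = {(x,y) : x² + y²/v² ≤ 1} equals 2u·arcsin(v√(1-u²)/√(1-u²v²)) + 2v·arcsin(u√(1-v²)/√(1-u²v²)). -/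
open MeasureTheory Real Set

private lemma my_integral_sqrt {a : ℝ} (ha0 : 0 ≤ a) (ha1 : a ≤ 1) :
    ∫ x in (-a)..a, Real.sqrt (1 - x ^ 2)
      = Real.arcsin a + a * Real.sqrt (1 - a ^ 2) := by
  have key : ∫ x in (-a)..a, Real.sqrt (1 - x ^ 2)
      = ((Real.arcsin a + a * Real.sqrt (1 - a ^ 2)) / 2)
        - ((Real.arcsin (-a) + (-a) * Real.sqrt (1 - (-a) ^ 2)) / 2) := by
    apply intervalIntegral.integral_eq_sub_of_hasDerivAt_of_le (by linarith)
    · apply ContinuousOn.div_const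
      apply ContinuousOn.add
      · exact Real.continuous_arcsin.continuousOn
      · exact (continuous_id.mul ((continuous_const.sub (continuous_pow 2)).sqrt)).continuousOn
    · intro x hx
      have hx1 : -1 < x := by cases hx; linarith
      have hx2 : x < 1 := by cases hx; linarith
      have h2 : (0:ℝ) < 1 - x ^ 2 := by nlinarith
      have hs : Real.sqrt (1 - x ^ 2) ≠ 0 := by positivity
      have hs0 : (0:ℝ) < Real.sqrt (1 - x ^ 2) := by positivity
      have hsq : Real.sqrt (1 - x ^ 2) ^ 2 = 1 - x ^ 2 := Real.sq_sqrt h2.le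
      have d1 : HasDerivAt Real.arcsin (1 / Real.sqrt (1 - x ^ 2)) x :=
        Real.hasDerivAt_arcsin (by linarith) (by linarith)
      have d2 : HasDerivAt (fun y : ℝ => 1 - y ^ 2) (-(2 * x)) x := by
        simpa using ((hasDerivAt_pow 2 x).const_sub 1)
      have d3 : HasDerivAt (fun y : ℝ => Real.sqrt (1 - y ^ 2))
          (-(2 * x) / (2 * Real.sqrt (1 - x ^ 2))) x := (d2.sqrt (by linarith))
      have d4 : HasDerivAt (fun y : ℝ => y * Real.sqrt (1 - y ^ 2))
          (1 * Real.sqrt (1 - x ^ 2) + x * (-(2 * x) / (2 * Real.sqrt (1 - x ^ 2)))) x :=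
        (hasDerivAt_id x).mul d3
      have := ((d1.add d4).div_const 2)
      convert this using 1
      · rfl
      · rfl
      field_simp
      nlinarith [hsq, hs0]
    · exact ((continuous_const.sub (continuous_pow 2)).sqrt).intervalIntegrable _ _
  rw [key, Real.arcsin_neg]
  ring_nf

open Classical in
private lemma my_volume_cc {f g : ℝ → ℝ} {s : Set ℝ} (hf : Measurable f) (hg : Measurable g)
    (hs : MeasurableSet s) :
    (volume : Measure (ℝ × ℝ)) {p : ℝ × ℝ | p.1 ∈ s ∧ p.2 ∈ Icc (f p.1) (g p.1)}
      = ∫⁻ x in s, ENNReal.ofReal (g x - f x) := by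
  rw [Measure.volume_eq_prod, Measure.prod_apply (measurableSet_region_between_cc hf hg hs)]
  have h : (fun x => volume (Prod.mk x ⁻¹' {p : ℝ × ℝ | p.1 ∈ s ∧ p.2 ∈ Icc (f p.1) (g p.1)}))
      = s.indicator fun x => ENNReal.ofReal (g x - f x) := by
    funext x
    rw [Set.indicator_apply]
    split_ifs with h
    · have hx : Prod.mk x ⁻¹' {p : ℝ × ℝ | p.1 ∈ s ∧ p.2 ∈ Icc (f p.1) (g p.1)}
          = Icc (f x) (g x) := by ext y; simp [h]
      rw [hx, Real.volume_Icc]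
    · have hx : Prod.mk x ⁻¹' {p : ℝ × ℝ | p.1 ∈ s ∧ p.2 ∈ Icc (f p.1) (g p.1)}
          = (∅ : Set ℝ) := by ext y; simp [h]
      rw [hx]; simp
  rw [h, lintegral_indicator] <;> simp only [hs]

private lemma my_volume_strip {a c : ℝ} (ha0 : 0 ≤ a) (ha1 : a ≤ 1) (hc : 0 ≤ c) :
    (volume : Measure (ℝ × ℝ)) {p : ℝ × ℝ | p.1 ^ 2 ≤ a ^ 2 ∧ p.2 ^ 2 ≤ c ^ 2 * (1 - p.1 ^ 2)}
      = ENNReal.ofReal (2 * c * (Real.arcsin a + a * Real.sqrt (1 - a ^ 2))) := by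
  have hcont : Continuous fun x : ℝ => c * Real.sqrt (1 - x ^ 2) :=
    continuous_const.mul ((continuous_const.sub (continuous_pow 2)).sqrt)
  have hseq : {p : ℝ × ℝ | p.1 ^ 2 ≤ a ^ 2 ∧ p.2 ^ 2 ≤ c ^ 2 * (1 - p.1 ^ 2)}
      = {p : ℝ × ℝ | p.1 ∈ Icc (-a) a ∧
          p.2 ∈ Icc (-(c * Real.sqrt (1 - p.1 ^ 2))) (c * Real.sqrt (1 - p.1 ^ 2))} := by
    ext p
    simp only [mem_setOf_eq, mem_Icc]
    constructor
    · rintro ⟨h1, h2⟩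
      have hx2 : (0:ℝ) ≤ 1 - p.1 ^ 2 := by nlinarith
      have hw2 : (c * Real.sqrt (1 - p.1 ^ 2)) ^ 2 = c ^ 2 * (1 - p.1 ^ 2) := by
        rw [mul_pow, Real.sq_sqrt hx2]
      have hw0 : 0 ≤ c * Real.sqrt (1 - p.1 ^ 2) := by positivity
      refine ⟨⟨by nlinarith, by nlinarith⟩, by nlinarith, by nlinarith⟩
    · rintro ⟨⟨h1, h2⟩, h3, h4⟩
      have hx2 : (0:ℝ) ≤ 1 - p.1 ^ 2 := by nlinarith
      have hw2 : (c * Real.sqrt (1 - p.1 ^ 2)) ^ 2 = c ^ 2 * (1 - p.1 ^ 2) := by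
        rw [mul_pow, Real.sq_sqrt hx2]
      exact ⟨by nlinarith, by nlinarith⟩
  rw [hseq, my_volume_cc (f := fun x => -(c * Real.sqrt (1 - x ^ 2))) (hcont.neg).measurable hcont.measurable measurableSet_Icc]
  have hnn : ∀ x : ℝ, 0 ≤ c * Real.sqrt (1 - x ^ 2) - -(c * Real.sqrt (1 - x ^ 2)) := by
    intro x; have : 0 ≤ c * Real.sqrt (1 - x ^ 2) := by positivity
    linarith
  rw [← ofReal_integral_eq_lintegral_ofReal]
  · congr 1
    rw [MeasureTheory.integral_Icc_eq_integral_Ioc,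
      ← intervalIntegral.integral_of_le (by linarith : -a ≤ a)]
    have : ∀ x : ℝ, c * Real.sqrt (1 - x ^ 2) - -(c * Real.sqrt (1 - x ^ 2))
        = (2 * c) * Real.sqrt (1 - x ^ 2) := by intro x; ring
    simp_rw [this]
    rw [intervalIntegral.integral_const_mul, my_integral_sqrt ha0 ha1]
  · exact ((hcont.sub hcont.neg)).integrableOn_Icc
  · exact Filter.Eventually.of_forall fun x => hnn x

set_option maxHeartbeats 1000000 in
/-- Area of the intersection of the ellipses x²/u² + y² ≤ 1 and x² + y²/v² ≤ 1
(written as x² ≤ u²(1-y²) and y² ≤ v²(1-x²) to handle the degenerate cases). -/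
theorem stmt_17 (u v : ℝ) (hu0 : 0 ≤ u) (hu1 : u ≤ 1) (hv0 : 0 ≤ v) (hv1 : v ≤ 1)
    (hne : (u, v) ≠ (1, 1)) :
    (volume ({p : ℝ × ℝ | p.1 ^ 2 ≤ u ^ 2 * (1 - p.2 ^ 2)} ∩
        {p : ℝ × ℝ | p.2 ^ 2 ≤ v ^ 2 * (1 - p.1 ^ 2)})).toReal
      = 2 * u * Real.arcsin (v * Real.sqrt (1 - u ^ 2) /
          Real.sqrt (1 - u ^ 2 * v ^ 2))
        + 2 * v * Real.arcsin (u * Real.sqrt (1 - v ^ 2) /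
          Real.sqrt (1 - u ^ 2 * v ^ 2)) := by
  have hD : 0 < 1 - u ^ 2 * v ^ 2 := by
    rcases eq_or_lt_of_le hu1 with h | h
    · rcases eq_or_lt_of_le hv1 with h2 | h2
      · exact absurd (by rw [h, h2]) hne
      · subst h; nlinarith
    · nlinarith [sq_nonneg v, mul_le_of_le_one_right (sq_nonneg u) (show v ^ 2 ≤ 1 by nlinarith)]
  set D := 1 - u ^ 2 * v ^ 2 with hDdef
  have h1v : (0:ℝ) ≤ 1 - v ^ 2 := by nlinarith
  have h1u : (0:ℝ) ≤ 1 - u ^ 2 := by nlinarith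
  have hsD : 0 < Real.sqrt D := Real.sqrt_pos.mpr hD
  set a := u * Real.sqrt (1 - v ^ 2) / Real.sqrt D with hadef
  set b := v * Real.sqrt (1 - u ^ 2) / Real.sqrt D with hbdef
  have ha2 : a ^ 2 * D = u ^ 2 * (1 - v ^ 2) := by
    rw [hadef, div_pow, mul_pow, Real.sq_sqrt h1v, Real.sq_sqrt hD.le]
    field_simp
  have hb2 : b ^ 2 * D = v ^ 2 * (1 - u ^ 2) := by
    rw [hbdef, div_pow, mul_pow, Real.sq_sqrt h1u, Real.sq_sqrt hD.le]
    field_simp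
  have ha0 : 0 ≤ a := by rw [hadef]; positivity
  have hb0 : 0 ≤ b := by rw [hbdef]; positivity
  have ha1 : a ≤ 1 := by nlinarith [ha2, sq_nonneg (a - 1), sq_nonneg (a + 1)]
  have hb1 : b ≤ 1 := by nlinarith [hb2, sq_nonneg (b - 1), sq_nonneg (b + 1)]
  have h1a : (1 - a ^ 2) * D = 1 - u ^ 2 := by rw [hDdef] at ha2 ⊢; nlinarith [ha2]
  have h1b : (1 - b ^ 2) * D = 1 - v ^ 2 := by rw [hDdef] at hb2 ⊢; nlinarith [hb2]
  have hva : v * Real.sqrt (1 - a ^ 2) = b := by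
    have h : 1 - a ^ 2 = (1 - u ^ 2) / D := by
      field_simp
      linarith [h1a]
    rw [h, Real.sqrt_div h1u, hbdef]
    ring
  have hub : u * Real.sqrt (1 - b ^ 2) = a := by
    have h : 1 - b ^ 2 = (1 - v ^ 2) / D := by
      field_simp
      linarith [h1b]
    rw [h, Real.sqrt_div h1v, hadef]
    ring
  have m1 : Measurable fun q : ℝ × ℝ => q.1 ^ 2 := measurable_fst.pow_const 2
  have m2 : Measurable fun q : ℝ × ℝ => q.2 ^ 2 := measurable_snd.pow_const 2
  have m3 : Measurable fun q : ℝ × ℝ => u ^ 2 * (1 - q.2 ^ 2) :=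
    (measurable_const.sub m2).const_mul _
  have m4 : Measurable fun q : ℝ × ℝ => u ^ 2 * (1 - q.1 ^ 2) :=
    (measurable_const.sub m1).const_mul _
  set A := {p : ℝ × ℝ | p.1 ^ 2 ≤ a ^ 2 ∧ p.2 ^ 2 ≤ v ^ 2 * (1 - p.1 ^ 2)} with hA
  set B := {p : ℝ × ℝ | p.2 ^ 2 ≤ b ^ 2 ∧ p.1 ^ 2 ≤ u ^ 2 * (1 - p.2 ^ 2)} with hB
  have hSAB : {p : ℝ × ℝ | p.1 ^ 2 ≤ u ^ 2 * (1 - p.2 ^ 2)} ∩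
      {p : ℝ × ℝ | p.2 ^ 2 ≤ v ^ 2 * (1 - p.1 ^ 2)} = A ∪ B := by
    ext p
    simp only [hA, hB, Set.mem_inter_iff, Set.mem_union, Set.mem_setOf_eq]
    constructor
    · rintro ⟨h1, h2⟩
      by_cases hx : p.1 ^ 2 ≤ a ^ 2
      · exact Or.inl ⟨hx, h2⟩
      · push_neg at hx
        refine Or.inr ⟨?_, h1⟩
        by_cases hu : u = 0
        · exfalso; rw [hu] at h1; nlinarith [sq_nonneg a, sq_nonneg p.1]
        · have hu2 : 0 < u ^ 2 := by positivity
          have e1 : a ^ 2 * D < p.1 ^ 2 * D := mul_lt_mul_of_pos_right hx hD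
          have e2 : p.1 ^ 2 * D ≤ u ^ 2 * (1 - p.2 ^ 2) * D :=
            mul_le_mul_of_nonneg_right h1 hD.le
          have h8 : 0 < u ^ 2 * ((1 - p.2 ^ 2) * D - (1 - v ^ 2)) := by
            linarith [e1, e2, ha2]
          have h9 : 0 < (1 - p.2 ^ 2) * D - (1 - v ^ 2) := by
            by_contra hcon
            push_neg at hcon
            nlinarith [mul_nonpos_of_nonneg_of_nonpos hu2.le hcon]
          by_contra hcon
          push_neg at hcon
          have e3 : b ^ 2 * D < p.2 ^ 2 * D := mul_lt_mul_of_pos_right hcon hD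
          rw [hDdef] at h9 e3 hb2
          linarith [h9, e3, hb2]
    · rintro (⟨h1, h2⟩ | ⟨h1, h2⟩)
      · refine ⟨?_, h2⟩
        have e1 : p.1 ^ 2 * D ≤ a ^ 2 * D := mul_le_mul_of_nonneg_right h1 hD.le
        have e2 : u ^ 2 * p.2 ^ 2 ≤ u ^ 2 * (v ^ 2 * (1 - p.1 ^ 2)) :=
          mul_le_mul_of_nonneg_left h2 (sq_nonneg u)
        rw [hDdef] at e1
        linarith [e1, e2, ha2, hDdef ▸ ha2]
      · refine ⟨h2, ?_⟩
        have e1 : p.2 ^ 2 * D ≤ b ^ 2 * D := mul_le_mul_of_nonneg_right h1 hD.le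
        have e2 : v ^ 2 * p.1 ^ 2 ≤ v ^ 2 * (u ^ 2 * (1 - p.2 ^ 2)) :=
          mul_le_mul_of_nonneg_left h2 (sq_nonneg v)
        rw [hDdef] at e1
        linarith [e1, e2, hDdef ▸ hb2]
  have hABrect : A ∩ B = Icc (-a) a ×ˢ Icc (-b) b := by
    have h1a' : v ^ 2 * ((1 - a ^ 2) * D) = v ^ 2 * (1 - u ^ 2) := by rw [h1a]
    have h1b' : u ^ 2 * ((1 - b ^ 2) * D) = u ^ 2 * (1 - v ^ 2) := by rw [h1b]
    ext p
    simp only [hA, hB, Set.mem_inter_iff, Set.mem_setOf_eq, Set.mem_prod, Set.mem_Icc]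
    constructor
    · rintro ⟨⟨h1, _⟩, h3, _⟩
      exact ⟨abs_le_of_sq_le_sq' h1 ha0, abs_le_of_sq_le_sq' h3 hb0⟩
    · rintro ⟨⟨h1, h2⟩, h3, h4⟩
      have hx : p.1 ^ 2 ≤ a ^ 2 := sq_le_sq' h1 h2
      have hy : p.2 ^ 2 ≤ b ^ 2 := sq_le_sq' h3 h4
      have ex : v ^ 2 * D * p.1 ^ 2 ≤ v ^ 2 * D * a ^ 2 :=
        mul_le_mul_of_nonneg_left hx (mul_nonneg (sq_nonneg v) hD.le)
      have ey : u ^ 2 * D * p.2 ^ 2 ≤ u ^ 2 * D * b ^ 2 :=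
        mul_le_mul_of_nonneg_left hy (mul_nonneg (sq_nonneg u) hD.le)
      have eyD : p.2 ^ 2 * D ≤ b ^ 2 * D := mul_le_mul_of_nonneg_right hy hD.le
      have exD : p.1 ^ 2 * D ≤ a ^ 2 * D := mul_le_mul_of_nonneg_right hx hD.le
      refine ⟨⟨hx, ?_⟩, hy, ?_⟩
      · by_contra hcon
        push_neg at hcon
        have e3 : v ^ 2 * (1 - p.1 ^ 2) * D < p.2 ^ 2 * D := mul_lt_mul_of_pos_right hcon hD
        linarith [e3, eyD, hb2, h1a', ex]
      · by_contra hcon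
        push_neg at hcon
        have e3 : u ^ 2 * (1 - p.2 ^ 2) * D < p.1 ^ 2 * D := mul_lt_mul_of_pos_right hcon hD
        linarith [e3, exD, ha2, h1b', ey]
  have hvolA : volume A = ENNReal.ofReal
      (2 * v * (Real.arcsin a + a * Real.sqrt (1 - a ^ 2))) := by
    rw [hA]; exact my_volume_strip ha0 ha1 hv0
  have hBmeas : MeasurableSet B := by
    have : B = {p : ℝ × ℝ | p.2 ^ 2 ≤ b ^ 2} ∩
        {p : ℝ × ℝ | p.1 ^ 2 ≤ u ^ 2 * (1 - p.2 ^ 2)} := rfl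
    rw [this]
    exact (measurableSet_le m2 measurable_const).inter (measurableSet_le m1 m3)
  have hvolB : volume B = ENNReal.ofReal
      (2 * u * (Real.arcsin b + b * Real.sqrt (1 - b ^ 2))) := by
    have hswap : B = Prod.swap ⁻¹'
        {q : ℝ × ℝ | q.1 ^ 2 ≤ b ^ 2 ∧ q.2 ^ 2 ≤ u ^ 2 * (1 - q.1 ^ 2)} := rfl
    have hB'meas : MeasurableSet
        {q : ℝ × ℝ | q.1 ^ 2 ≤ b ^ 2 ∧ q.2 ^ 2 ≤ u ^ 2 * (1 - q.1 ^ 2)} := by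
      have : {q : ℝ × ℝ | q.1 ^ 2 ≤ b ^ 2 ∧ q.2 ^ 2 ≤ u ^ 2 * (1 - q.1 ^ 2)}
          = {q : ℝ × ℝ | q.1 ^ 2 ≤ b ^ 2} ∩
            {q : ℝ × ℝ | q.2 ^ 2 ≤ u ^ 2 * (1 - q.1 ^ 2)} := rfl
      rw [this]
      exact (measurableSet_le m1 measurable_const).inter (measurableSet_le m2 m4)
    rw [hswap, Measure.volume_eq_prod,
      Measure.measurePreserving_swap.measure_preimage hB'meas.nullMeasurableSet,
      ← Measure.volume_eq_prod]
    exact my_volume_strip hb0 hb1 hu0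
  have hvolR : volume (Icc (-a) a ×ˢ Icc (-b) b) = ENNReal.ofReal (4 * (a * b)) := by
    rw [Measure.volume_eq_prod, Measure.prod_prod, Real.volume_Icc, Real.volume_Icc,
      ← ENNReal.ofReal_mul (by linarith)]
    congr 1
    ring
  have harcsin_a : 0 ≤ Real.arcsin a := Real.arcsin_nonneg.mpr ha0
  have harcsin_b : 0 ≤ Real.arcsin b := Real.arcsin_nonneg.mpr hb0
  have hVA0 : 0 ≤ 2 * v * (Real.arcsin a + a * Real.sqrt (1 - a ^ 2)) := by positivity
  have hVB0 : 0 ≤ 2 * u * (Real.arcsin b + b * Real.sqrt (1 - b ^ 2)) := by positivity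
  have hkey := measure_union_add_inter (μ := volume) A hBmeas
  rw [hABrect, hvolA, hvolB, hvolR] at hkey
  have hfin : volume (A ∪ B) ≠ ⊤ := by
    refine ne_of_lt (lt_of_le_of_lt (measure_union_le A B) ?_)
    rw [hvolA, hvolB]
    exact ENNReal.add_lt_top.mpr ⟨ENNReal.ofReal_lt_top, ENNReal.ofReal_lt_top⟩
  have htr := congrArg ENNReal.toReal hkey
  rw [ENNReal.toReal_add hfin ENNReal.ofReal_ne_top,
    ENNReal.toReal_add ENNReal.ofReal_ne_top ENNReal.ofReal_ne_top,
    ENNReal.toReal_ofReal (by positivity), ENNReal.toReal_ofReal hVA0,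
    ENNReal.toReal_ofReal hVB0] at htr
  rw [hSAB]
  linear_combination htr + (2 * a) * hva + (2 * b) * hub
end

section
/- For 0 ≤ x, y ≤ 1 with x² + y² < 1, the complementary cdf of the distribution with density 1/(2π√(1-s²-t²)) on the unit disk satisfies P[X > x, Y > y] = (1-x-y)/4 + α(x,y), where α(x,y) = (1/(2π))[x·arcsin(y/√(1-x²)) + y·arcsin(x/√(1-y²)) - arcsin(xy/√((1-x²)(1-y²)))]. -/
set_option maxHeartbeats 1000000

open MeasureTheory Real

open Set intervalIntegral

lemma sqrt_one_sub_div_sq {u v : ℝ} (hv : 0 < v) :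
    Real.sqrt (1 - (u / v) ^ 2) = Real.sqrt (v ^ 2 - u ^ 2) / v := by
  have h : 1 - (u / v) ^ 2 = (v ^ 2 - u ^ 2) / v ^ 2 := by field_simp
  rw [h, Real.sqrt_div' _ (by positivity), Real.sqrt_sq hv.le]

lemma F0_deriv {y b s : ℝ} (hy : 0 < y) (hy1 : y < 1) (hb : b = Real.sqrt (1 - y ^ 2))
    (hs0 : 0 ≤ s) (hsb : s < b) :
    HasDerivAt (fun s => s * Real.arcsin (y / Real.sqrt (1 - s ^ 2))
        + y * Real.arcsin (s / b)
        - Real.arcsin (s * y / (Real.sqrt (1 - s ^ 2) * b)))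
      (Real.arcsin (y / Real.sqrt (1 - s ^ 2))) s := by
  have hy2 : y ^ 2 < 1 := by nlinarith
  have hb2 : b ^ 2 = 1 - y ^ 2 := by rw [hb]; exact Real.sq_sqrt (by linarith)
  have hb0 : 0 < b := by rw [hb]; exact Real.sqrt_pos.2 (by linarith)
  have hs2 : s ^ 2 < 1 - y ^ 2 := by nlinarith
  have hDpos : 0 < 1 - s ^ 2 - y ^ 2 := by nlinarith
  set c := Real.sqrt (1 - s ^ 2) with hcdef
  set D := Real.sqrt (1 - s ^ 2 - y ^ 2) with hDdef
  have hc2 : c ^ 2 = 1 - s ^ 2 := Real.sq_sqrt (by nlinarith)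
  have hcpos : 0 < c := Real.sqrt_pos.2 (by nlinarith)
  have hD : 0 < D := Real.sqrt_pos.2 hDpos
  have hD2 : D ^ 2 = 1 - s ^ 2 - y ^ 2 := Real.sq_sqrt hDpos.le
  have hyc : y < c := by rw [hcdef]; exact Real.lt_sqrt hy.le |>.2 (by nlinarith)
  -- sqrt simplifications
  have e1 : Real.sqrt (1 - (y / c) ^ 2) = D / c := by
    rw [sqrt_one_sub_div_sq hcpos, hc2]
  have e2 : Real.sqrt (1 - (s / b) ^ 2) = D / b := by
    rw [sqrt_one_sub_div_sq hb0, hb2, show 1 - y ^ 2 - s ^ 2 = 1 - s ^ 2 - y ^ 2 by ring]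
  have e3 : Real.sqrt (1 - (s * y / (c * b)) ^ 2) = D / (c * b) := by
    rw [sqrt_one_sub_div_sq (mul_pos hcpos hb0),
      show (c * b) ^ 2 - (s * y) ^ 2 = 1 - s ^ 2 - y ^ 2 by rw [mul_pow, hc2, hb2]; ring]
  -- derivative of c
  have hc' : HasDerivAt (fun s => Real.sqrt (1 - s ^ 2)) (-s / c) s := by
    have hp : HasDerivAt (fun s : ℝ => 1 - s ^ 2) (-(2 * s)) s := by
      simpa using (hasDerivAt_pow 2 s).const_sub 1
    have := hp.sqrt (by nlinarith : (1 : ℝ) - s ^ 2 ≠ 0)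
    refine this.congr_deriv ?_
    symm
    rw [← hcdef]
    field_simp
  -- term 1
  have hq1 : HasDerivAt (fun s => y / Real.sqrt (1 - s ^ 2)) (y * s / c ^ 3) s := by
    have := (hasDerivAt_const s y).div hc' hcpos.ne'
    refine this.congr_deriv ?_
    symm
    rw [← hcdef]
    field_simp
    ring
  have ha1 : HasDerivAt (fun s => Real.arcsin (y / Real.sqrt (1 - s ^ 2)))
      (y * s / (c ^ 2 * D)) s := by
    have harg0 : (0:ℝ) ≤ y / c := by positivity
    have harg1 : y / c < 1 := (div_lt_one hcpos).2 hyc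
    have := (Real.hasDerivAt_arcsin (by linarith : y / c ≠ -1) harg1.ne).comp s hq1
    refine this.congr_deriv ?_
    symm
    rw [e1]
    field_simp
  have d1 : HasDerivAt (fun s => s * Real.arcsin (y / Real.sqrt (1 - s ^ 2)))
      (Real.arcsin (y / c) + s * (y * s / (c ^ 2 * D))) s := by
    have := (hasDerivAt_id s).mul ha1
    refine this.congr_deriv ?_
    symm
    simp only [id_eq]
    ring
  -- term 2
  have d2 : HasDerivAt (fun s => y * Real.arcsin (s / b)) (y * (1 / D)) s := by
    have hq2 : HasDerivAt (fun s : ℝ => s / b) (1 / b) s := (hasDerivAt_id s).div_const b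
    have harg0 : (0:ℝ) ≤ s / b := by positivity
    have harg1 : s / b < 1 := (div_lt_one hb0).2 hsb
    have := ((Real.hasDerivAt_arcsin (by linarith : s / b ≠ -1) harg1.ne).comp s hq2).const_mul y
    refine this.congr_deriv ?_
    symm
    rw [e2]
    field_simp
  -- term 3
  have hq3 : HasDerivAt (fun s => s * y / (Real.sqrt (1 - s ^ 2) * b)) (y / (b * c ^ 3)) s := by
    have hnum : HasDerivAt (fun s : ℝ => s * y) y s := by
      simpa using (hasDerivAt_id s).mul_const y
    have hden : HasDerivAt (fun s => Real.sqrt (1 - s ^ 2) * b) (-s / c * b) s :=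
      hc'.mul_const b
    have := hnum.div hden (by positivity)
    refine this.congr_deriv ?_
    symm
    rw [← hcdef]
    field_simp
    ring_nf
    linear_combination (-1) * hc2
  have d3 : HasDerivAt (fun s => Real.arcsin (s * y / (Real.sqrt (1 - s ^ 2) * b)))
      (y / (c ^ 2 * D)) s := by
    have harg0 : (0:ℝ) ≤ s * y / (c * b) := by positivity
    have harg1 : s * y / (c * b) < 1 := by
      rw [div_lt_one (mul_pos hcpos hb0)]
      nlinarith [hc2, hb2]
    have := (Real.hasDerivAt_arcsin (by linarith : s * y / (c * b) ≠ -1) harg1.ne).comp s hq3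
    refine this.congr_deriv ?_
    symm
    rw [e3]
    field_simp
  have := (d1.add d2).sub d3
  refine this.congr_deriv ?_
  symm
  field_simp
  ring_nf
  linear_combination (-y) * hc2

lemma inner_aux' {y c : ℝ} (hy : 0 ≤ y) (hyc : y < c) :
    IntegrableOn (fun t => 1 / Real.sqrt (c ^ 2 - t ^ 2)) (Set.Ioo y c) ∧
      ∫ t in Set.Ioo y c, 1 / Real.sqrt (c ^ 2 - t ^ 2)
        = π / 2 - Real.arcsin (y / c) := by
  have hc : 0 < c := lt_of_le_of_lt hy hyc
  have hderiv : ∀ t ∈ Set.Ioo y c,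
      HasDerivAt (fun t => Real.arcsin (t / c)) (1 / Real.sqrt (c ^ 2 - t ^ 2)) t := by
    intro t ht
    have ht0 : 0 ≤ t := hy.trans ht.1.le
    have h1 : t / c < 1 := (div_lt_one hc).2 ht.2
    have h0 : 0 ≤ t / c := div_nonneg ht0 hc.le
    have hd : HasDerivAt (fun t : ℝ => t / c) (1 / c) t := (hasDerivAt_id t).div_const c
    have := (Real.hasDerivAt_arcsin (by linarith : t / c ≠ -1) (ne_of_lt h1)).comp t hd
    refine this.congr_deriv ?_
    symm
    rw [sqrt_one_sub_div_sq hc]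
    have hD : 0 < Real.sqrt (c ^ 2 - t ^ 2) := Real.sqrt_pos.2 (by nlinarith [ht.2])
    field_simp
  have hpos : ∀ t ∈ Set.Ioo y c, 0 ≤ 1 / Real.sqrt (c ^ 2 - t ^ 2) := fun t _ => by positivity
  have hcont : ContinuousOn (fun t => Real.arcsin (t / c)) (Set.Icc y c) :=
    (Real.continuous_arcsin.comp (continuous_id.div_const c)).continuousOn
  have hInt : IntegrableOn (fun t => 1 / Real.sqrt (c ^ 2 - t ^ 2)) (Set.Ioc y c) :=
    integrableOn_deriv_of_nonneg hcont hderiv hpos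
  refine ⟨hInt.mono_set Set.Ioo_subset_Ioc_self, ?_⟩
  rw [← MeasureTheory.integral_Ioc_eq_integral_Ioo, ← integral_of_le hyc.le]
  rw [integral_eq_sub_of_hasDeriv_right_of_le hyc.le hcont
    (fun t ht => (hderiv t ht).hasDerivWithinAt)
    ((intervalIntegrable_iff_integrableOn_Ioc_of_le hyc.le).2 hInt)]
  rw [div_self hc.ne', Real.arcsin_one]

/-- For the circularly symmetric density 1/(2π√(1-s²-t²)) on the open unit disk,
P[X > x, Y > y] = (1-x-y)/4 + α(x,y) for 0 ≤ x,y ≤ 1 with x² + y² < 1. -/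
theorem stmt_19 (x y : ℝ) (hx0 : 0 ≤ x) (hx1 : x ≤ 1) (hy0 : 0 ≤ y) (hy1 : y ≤ 1)
    (hxy : x ^ 2 + y ^ 2 < 1) :
    ∫ p : ℝ × ℝ,
        Set.indicator {q : ℝ × ℝ | x < q.1 ∧ y < q.2 ∧ q.1 ^ 2 + q.2 ^ 2 < 1}
          (fun q => 1 / (2 * Real.pi * Real.sqrt (1 - q.1 ^ 2 - q.2 ^ 2))) p
      = (1 - x - y) / 4
        + (1 / (2 * Real.pi)) *
          (x * Real.arcsin (y / Real.sqrt (1 - x ^ 2))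
            + y * Real.arcsin (x / Real.sqrt (1 - y ^ 2))
            - Real.arcsin (x * y / Real.sqrt ((1 - x ^ 2) * (1 - y ^ 2)))) := by
  have hπ : (0:ℝ) < π := Real.pi_pos
  set S : Set (ℝ × ℝ) := {q : ℝ × ℝ | x < q.1 ∧ y < q.2 ∧ q.1 ^ 2 + q.2 ^ 2 < 1} with hS
  set f : ℝ × ℝ → ℝ := fun q => 1 / (2 * Real.pi * Real.sqrt (1 - q.1 ^ 2 - q.2 ^ 2)) with hf
  set b := Real.sqrt (1 - y ^ 2) with hbdef
  have hy2 : y ^ 2 < 1 := by nlinarith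
  have hb2 : b ^ 2 = 1 - y ^ 2 := Real.sq_sqrt (by linarith)
  have hb0 : 0 < b := Real.sqrt_pos.2 (by linarith)
  have hxb : x < b := by rw [hbdef]; exact (Real.lt_sqrt hx0).2 (by nlinarith)
  have hb1 : b ≤ 1 := by rw [hbdef]; exact Real.sqrt_le_one.2 (by nlinarith)
  -- pointwise description of slices
  have key1 : ∀ s ∈ Set.Ioo x b, (fun t => S.indicator f (s, t))
      = (Set.Ioo y (Real.sqrt (1 - s ^ 2))).indicator
          (fun t => 1 / (2 * Real.pi * Real.sqrt (1 - s ^ 2 - t ^ 2))) := by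
    intro s hs
    have hs0 : 0 ≤ s := hx0.trans hs.1.le
    have hcs2 : Real.sqrt (1 - s ^ 2) ^ 2 = 1 - s ^ 2 :=
      Real.sq_sqrt (by nlinarith [hs.2, hb1] : (0:ℝ) ≤ 1 - s ^ 2)
    funext t
    by_cases ht : t ∈ Set.Ioo y (Real.sqrt (1 - s ^ 2))
    · rw [Set.indicator_of_mem ht, Set.indicator_of_mem]
      exact ⟨hs.1, ht.1, by nlinarith [ht.2, hy0.trans ht.1.le]⟩
    · rw [Set.indicator_of_notMem ht, Set.indicator_of_notMem]
      intro hmem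
      obtain ⟨h1, h2, h3⟩ := hmem
      exact ht ⟨h2, (Real.lt_sqrt (hy0.trans h2.le)).2 (by nlinarith)⟩
  have key2 : ∀ s ∉ Set.Ioo x b, (fun t => S.indicator f (s, t)) = fun _ => (0:ℝ) := by
    intro s hs
    funext t
    apply Set.indicator_of_notMem
    intro hmem
    obtain ⟨h1, h2, h3⟩ := hmem
    apply hs
    refine ⟨h1, ?_⟩
    have hs0 : 0 ≤ s := hx0.trans h1.le
    have : s ^ 2 < b ^ 2 := by nlinarith
    exact lt_of_pow_lt_pow_left₀ 2 hb0.le this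
  -- inner integral
  have keyInner : ∀ s ∈ Set.Ioo x b,
      Integrable (fun t => S.indicator f (s, t)) ∧
        (∫ t, S.indicator f (s, t))
          = (π / 2 - Real.arcsin (y / Real.sqrt (1 - s ^ 2))) / (2 * π) := by
    intro s hs
    have hs0 : 0 ≤ s := hx0.trans hs.1.le
    have hcs2 : Real.sqrt (1 - s ^ 2) ^ 2 = 1 - s ^ 2 :=
      Real.sq_sqrt (by nlinarith [hs.2, hb1] : (0:ℝ) ≤ 1 - s ^ 2)
    have hyc : y < Real.sqrt (1 - s ^ 2) := (Real.lt_sqrt hy0).2 (by nlinarith [hs.2])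
    have hIA := inner_aux' hy0 hyc
    have hfeq : (fun t => 1 / (2 * Real.pi * Real.sqrt (1 - s ^ 2 - t ^ 2)))
        = fun t => (1 / (2 * π)) * (1 / Real.sqrt (Real.sqrt (1 - s ^ 2) ^ 2 - t ^ 2)) := by
      funext t
      rw [hcs2, one_div_mul_one_div]
    rw [key1 s hs]
    constructor
    · refine MeasureTheory.IntegrableOn.integrable_indicator ?_ measurableSet_Ioo
      rw [hfeq]
      exact hIA.1.const_mul _
    · rw [MeasureTheory.integral_indicator measurableSet_Ioo, hfeq,
        MeasureTheory.integral_const_mul, hIA.2]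
      ring
  -- the outer slice function
  have keyFun : (fun s => ∫ t, S.indicator f (s, t))
      = (Set.Ioo x b).indicator
          (fun s => (π / 2 - Real.arcsin (y / Real.sqrt (1 - s ^ 2))) / (2 * π)) := by
    funext s
    by_cases hs : s ∈ Set.Ioo x b
    · rw [Set.indicator_of_mem hs]; exact (keyInner s hs).2
    · rw [Set.indicator_of_notMem hs, key2 s hs]; simp
  -- measurability and integrability
  have hSm : MeasurableSet S :=
    (measurableSet_lt measurable_const measurable_fst).inter
      ((measurableSet_lt measurable_const measurable_snd).inter
        (measurableSet_lt ((measurable_fst.pow_const 2).add (measurable_snd.pow_const 2))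
          measurable_const))
  have hfm : Measurable f := by
    apply Measurable.div measurable_const
    exact (measurable_const.mul
      (Real.continuous_sqrt.measurable.comp
        ((measurable_const.sub (measurable_fst.pow_const 2)).sub (measurable_snd.pow_const 2))))
  have hf_nonneg : ∀ q, 0 ≤ f q := fun q => by
    have := Real.sqrt_nonneg (1 - q.1 ^ 2 - q.2 ^ 2)
    positivity
  -- continuity of the outer integrand
  have hA : ContinuousOn (fun s => Real.arcsin (y / Real.sqrt (1 - s ^ 2))) (Set.Icc x b) := by
    rcases eq_or_lt_of_le hy0 with h0 | h0
    · simp only [← h0, zero_div, Real.arcsin_zero]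
      exact continuousOn_const
    · have hblt : b < 1 := by nlinarith
      apply Real.continuous_arcsin.comp_continuousOn
      apply ContinuousOn.div continuousOn_const
      · exact (Real.continuous_sqrt.comp (continuous_const.sub (continuous_pow 2))).continuousOn
      · intro s hs
        exact (Real.sqrt_pos.2 (by nlinarith [hs.1, hs.2])).ne'
  have houter_cont : ContinuousOn
      (fun s => (π / 2 - Real.arcsin (y / Real.sqrt (1 - s ^ 2))) / (2 * π)) (Set.Icc x b) :=
    (continuousOn_const.sub hA).div_const _
  have hIoo_int : IntegrableOn
      (fun s => (π / 2 - Real.arcsin (y / Real.sqrt (1 - s ^ 2))) / (2 * π)) (Set.Ioo x b) :=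
    (houter_cont.integrableOn_Icc).mono_set Set.Ioo_subset_Icc_self
  have hInd_int : Integrable ((Set.Ioo x b).indicator
      (fun s => (π / 2 - Real.arcsin (y / Real.sqrt (1 - s ^ 2))) / (2 * π))) :=
    hIoo_int.integrable_indicator measurableSet_Ioo
  -- Fubini
  have hIntProd : Integrable (S.indicator f) (volume.prod volume) := by
    refine (MeasureTheory.integrable_prod_iff
      ((hfm.indicator hSm).aestronglyMeasurable)).2 ⟨?_, ?_⟩
    · refine MeasureTheory.ae_of_all _ fun s => ?_
      by_cases hs : s ∈ Set.Ioo x b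
      · exact (keyInner s hs).1
      · rw [key2 s hs]; exact integrable_zero _ _ _
    · have hnormeq : (fun s => ∫ t, ‖S.indicator f (s, t)‖)
          = (Set.Ioo x b).indicator
              (fun s => (π / 2 - Real.arcsin (y / Real.sqrt (1 - s ^ 2))) / (2 * π)) := by
        funext s
        have : (fun t => ‖S.indicator f (s, t)‖) = fun t => S.indicator f (s, t) :=
          funext fun t => Real.norm_of_nonneg
            (Set.indicator_nonneg (fun q _ => hf_nonneg q) _)
        rw [this]
        exact congrFun keyFun s
      rw [hnormeq]
      exact hInd_int
  rw [MeasureTheory.Measure.volume_eq_prod, MeasureTheory.integral_prod _ hIntProd, keyFun,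
    MeasureTheory.integral_indicator measurableSet_Ioo, MeasureTheory.integral_div]
  -- FTC for the outer integral
  set F0 : ℝ → ℝ := fun s => s * Real.arcsin (y / Real.sqrt (1 - s ^ 2))
      + y * Real.arcsin (s / b)
      - Real.arcsin (s * y / (Real.sqrt (1 - s ^ 2) * b)) with hF0
  have hF0cont : ContinuousOn F0 (Set.Icc x b) := by
    rcases eq_or_lt_of_le hy0 with h0 | h0
    · have hz : F0 = fun _ => 0 := by
        funext s; simp [hF0, ← h0]
      rw [hz]; exact continuousOn_const
    · have hblt : b < 1 := by nlinarith
      have hsq : ContinuousOn (fun s : ℝ => Real.sqrt (1 - s ^ 2)) (Set.Icc x b) :=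
        (Real.continuous_sqrt.comp (continuous_const.sub (continuous_pow 2))).continuousOn
      have hne : ∀ s ∈ Set.Icc x b, Real.sqrt (1 - s ^ 2) ≠ 0 := fun s hs =>
        (Real.sqrt_pos.2 (by nlinarith [hs.1, hs.2])).ne'
      refine ContinuousOn.sub (ContinuousOn.add ?_ ?_) ?_
      · exact continuousOn_id.mul
          (Real.continuous_arcsin.comp_continuousOn (continuousOn_const.div hsq hne))
      · exact continuousOn_const.mul
          (Real.continuous_arcsin.comp_continuousOn (continuousOn_id.div_const b))
      · exact Real.continuous_arcsin.comp_continuousOn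
          ((continuousOn_id.mul continuousOn_const).div (hsq.mul continuousOn_const)
            (fun s hs => mul_ne_zero (hne s hs) hb0.ne'))
  have hHderiv : ∀ s ∈ Set.Ioo x b,
      HasDerivAt (fun s => π / 2 * s - F0 s)
        (π / 2 - Real.arcsin (y / Real.sqrt (1 - s ^ 2))) s := by
    intro s hs
    have hd : HasDerivAt F0 (Real.arcsin (y / Real.sqrt (1 - s ^ 2))) s := by
      rcases eq_or_lt_of_le hy0 with h0 | h0
      · have hz : F0 = fun _ => 0 := by funext s; simp [hF0, ← h0]
        rw [hz]
        have : Real.arcsin (y / Real.sqrt (1 - s ^ 2)) = 0 := by simp [← h0]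
        rw [this]; exact hasDerivAt_const s 0
      · have hylt1 : y < 1 := by nlinarith
        rw [hF0]
        exact F0_deriv h0 hylt1 hbdef (hx0.trans hs.1.le) hs.2
    have hlin : HasDerivAt (fun s : ℝ => π / 2 * s) (π / 2) s := by
      simpa using (hasDerivAt_id s).const_mul (π / 2)
    exact hlin.sub hd
  have hcont2 : ContinuousOn (fun s => π / 2 * s - F0 s) (Set.Icc x b) :=
    (continuousOn_const.mul continuousOn_id).sub hF0cont
  have hintg : IntervalIntegrable
      (fun s => π / 2 - Real.arcsin (y / Real.sqrt (1 - s ^ 2))) volume x b := by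
    apply ContinuousOn.intervalIntegrable
    rw [Set.uIcc_of_le hxb.le]
    exact continuousOn_const.sub hA
  have hFTC := integral_eq_sub_of_hasDeriv_right_of_le hxb.le hcont2
    (fun s hs => (hHderiv s hs).hasDerivWithinAt) hintg
  rw [← MeasureTheory.integral_Ioc_eq_integral_Ioo, ← integral_of_le hxb.le, hFTC]
  -- evaluate F0 at b
  have hF0b : F0 b = b * (π / 2) + y * (π / 2) - π / 2 := by
    have h1b : 1 - b ^ 2 = y ^ 2 := by linarith
    rcases eq_or_lt_of_le hy0 with h0 | h0
    · have hb1' : b = 1 := by rw [hbdef, ← h0]; simp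
      simp [hF0, ← h0, hb1']
    · have hsb : Real.sqrt (1 - b ^ 2) = y := by rw [h1b, Real.sqrt_sq hy0]
      simp only [hF0]
      rw [hsb, div_self (ne_of_gt h0), div_self hb0.ne',
        show b * y / (y * b) = 1 by rw [mul_comm y b]; exact div_self (mul_pos hb0 h0).ne',
        Real.arcsin_one]
  rw [hF0b]
  simp only [hF0]
  rw [Real.sqrt_mul (show (0:ℝ) ≤ 1 - x ^ 2 by nlinarith) (1 - y ^ 2), ← hbdef]
  field_simp
  ring
end
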